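/- arXiv:2002.12529 — 12 statements merged into one kernel-verified Lean document; each statement's English description precedes it below -/
import Mathlib

section
/- If (x_n) is a sequence of integers with x_0 = 0, |x_{n+1} - x_n| ≤ 1 for all n, and x_n / n → ℓ as n → ∞, then r_n / n → |ℓ|, where r_n is the number of distinct values among x_0, x_1, ..., x_n. -/
open Filter

private lemma ivt_aux (x : ℕ → ℤ) (hinc : ∀ n, |x (n + 1) - x n| ≤ 1) (c : ℤ)
    (h0 : x 0 ≤ c) : ∀ n, c ≤ x n → ∃ k ≤ n, x k = c := by
  intro n
  induction n with
  | zero => intro h; exact ⟨0, le_refl 0, le_antisymm h0 h⟩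
  | succ n ih =>
    intro h
    by_cases hc : c ≤ x n
    · obtain ⟨k, hk, hxk⟩ := ih hc
      exact ⟨k, Nat.le_succ_of_le hk, hxk⟩
    · push_neg at hc
      refine ⟨n + 1, le_refl _, ?_⟩
      have := abs_le.mp (hinc n)
      omega

private lemma card_lower (x : ℕ → ℤ) (h0 : x 0 = 0)
    (hinc : ∀ n, |x (n + 1) - x n| ≤ 1) (n : ℕ) :
    |x n| + 1 ≤ (((Finset.range (n + 1)).image x).card : ℤ) := by
  have hsub : Finset.Icc (min 0 (x n)) (max 0 (x n)) ⊆ (Finset.range (n + 1)).image x := by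
    intro c hc
    simp only [Finset.mem_Icc] at hc
    rcases le_total 0 (x n) with h | h
    · have h1 : x 0 ≤ c := by omega
      have h2 : c ≤ x n := by
        have : max 0 (x n) = x n := max_eq_right h
        omega
      obtain ⟨k, hk, hxk⟩ := ivt_aux x hinc c h1 n h2
      exact Finset.mem_image.mpr ⟨k, Finset.mem_range.mpr (Nat.lt_succ_of_le hk), hxk⟩
    · have hinc' : ∀ m, |(-x (m + 1)) - (-x m)| ≤ 1 := by
        intro m
        have := hinc m
        rw [show (-x (m + 1)) - (-x m) = -(x (m + 1) - x m) by ring, abs_neg]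
        exact this
      have h1 : -x 0 ≤ -c := by omega
      have h2 : -c ≤ -x n := by
        have : min 0 (x n) = x n := min_eq_right h
        omega
      obtain ⟨k, hk, hxk⟩ := ivt_aux (fun m => -x m) hinc' (-c) h1 n h2
      refine Finset.mem_image.mpr ⟨k, Finset.mem_range.mpr (Nat.lt_succ_of_le hk), ?_⟩
      omega
  have hcard := Finset.card_le_card hsub
  rw [Int.card_Icc] at hcard
  have h1 : max 0 (x n) + 1 - min 0 (x n) = |x n| + 1 := by
    rcases le_total 0 (x n) with h | h
    · rw [max_eq_right h, min_eq_left h, abs_of_nonneg h]; ring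
    · rw [max_eq_left h, min_eq_right h, abs_of_nonpos h]; ring
  have h2 : ((max 0 (x n) + 1 - min 0 (x n)).toNat : ℤ) = |x n| + 1 := by
    rw [h1]; exact Int.toNat_of_nonneg (by positivity)
  omega

theorem stmt0 (x : ℕ → ℤ) (h0 : x 0 = 0)
    (hinc : ∀ n, |x (n + 1) - x n| ≤ 1) (ℓ : ℝ)
    (hlim : Tendsto (fun n : ℕ => (x n : ℝ) / n) atTop (nhds ℓ)) :
    Tendsto (fun n : ℕ => (((Finset.range (n + 1)).image x).card : ℝ) / n)
      atTop (nhds |ℓ|) := by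
  rw [Metric.tendsto_atTop]
  intro ε hε
  have habs : Tendsto (fun n : ℕ => |(x n : ℝ) / n|) atTop (nhds |ℓ|) := hlim.abs
  rw [Metric.tendsto_atTop] at habs hlim
  obtain ⟨N₀, hN₀⟩ := habs (ε / 2) (by positivity)
  obtain ⟨N₁, hN₁⟩ := hlim (ε / 4) (by positivity)
  set C : ℝ := (((Finset.range (N₁ + 1)).sup fun k => (x k).natAbs : ℕ) : ℝ) with hCdef
  have hC : ∀ k ≤ N₁, |(x k : ℝ)| ≤ C := by
    intro k hk
    have h1 : |(x k : ℝ)| = (((x k).natAbs : ℕ) : ℝ) := by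
      rw [Nat.cast_natAbs, Int.cast_abs]
    rw [h1, hCdef]
    exact_mod_cast Nat.cast_le.mpr
      (Finset.le_sup (f := fun k => (x k).natAbs) (Finset.mem_range.mpr (Nat.lt_succ_of_le hk)))
  have hCnn : 0 ≤ C := Nat.cast_nonneg _
  have key : ∀ n : ℕ, ∀ k ≤ n, (x k : ℝ) ≤ C + max ℓ 0 * n + ε / 4 * n ∧
      -C + min ℓ 0 * n - ε / 4 * n ≤ (x k : ℝ) := by
    intro n k hk
    have hnnn : (0:ℝ) ≤ n := Nat.cast_nonneg n
    have hmax : 0 ≤ max ℓ 0 * n := mul_nonneg (le_max_right ℓ 0) hnnn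
    have hmin : min ℓ 0 * n ≤ 0 := mul_nonpos_of_nonpos_of_nonneg (min_le_right ℓ 0) hnnn
    have hε4 : 0 ≤ ε / 4 * n := by positivity
    by_cases hkN : k ≤ N₁
    · have h2 := abs_le.mp (hC k hkN)
      constructor <;> linarith [h2.1, h2.2]
    · push_neg at hkN
      have hkpos : (0:ℝ) < k := by
        have : 0 < k := by omega
        exact_mod_cast this
      have hdist := hN₁ k (by omega)
      rw [Real.dist_eq, abs_lt] at hdist
      have hkn : (k:ℝ) ≤ n := by exact_mod_cast hk
      have hub : (x k : ℝ) < (ℓ + ε / 4) * k :=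
        (div_lt_iff₀ hkpos).mp (by linarith [hdist.2])
      have hlb : (ℓ - ε / 4) * k < (x k : ℝ) :=
        (lt_div_iff₀ hkpos).mp (by linarith [hdist.1])
      have hmax2 : ℓ * k ≤ max ℓ 0 * n :=
        le_trans (mul_le_mul_of_nonneg_right (le_max_left ℓ 0) hkpos.le)
          (mul_le_mul_of_nonneg_left hkn (le_max_right ℓ 0))
      have hmin2 : min ℓ 0 * n ≤ ℓ * k :=
        le_trans (mul_le_mul_of_nonpos_left hkn (min_le_right ℓ 0))
          (mul_le_mul_of_nonneg_right (min_le_left ℓ 0) hkpos.le)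
      have hε42 : ε / 4 * k ≤ ε / 4 * n := mul_le_mul_of_nonneg_left hkn (by positivity)
      constructor <;> nlinarith
  obtain ⟨N₂, hN₂⟩ := exists_nat_gt ((2 * C + 1) * 2 / ε)
  refine ⟨max (max N₀ (N₁ + 1)) (max N₂ 1), fun n hn => ?_⟩
  have hn0 : N₀ ≤ n := le_trans (le_trans (le_max_left _ _) (le_max_left _ _)) hn
  have hn2 : N₂ ≤ n := le_trans (le_trans (le_max_left _ _) (le_max_right _ _)) hn
  have hn3 : 1 ≤ n := le_trans (le_trans (le_max_right _ _) (le_max_right _ _)) hn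
  have hnpos : (0:ℝ) < n := by exact_mod_cast hn3
  set s := (Finset.range (n + 1)).image x with hsdef
  have hsne : s.Nonempty :=
    ⟨x 0, Finset.mem_image.mpr ⟨0, Finset.mem_range.mpr (Nat.succ_pos n), rfl⟩⟩
  -- lower bound
  have hlow : |ℓ| - ε < (s.card : ℝ) / n := by
    have h1 := hN₀ n hn0
    rw [Real.dist_eq, abs_lt] at h1
    have h2 : |(x n : ℝ) / n| = |(x n : ℝ)| / n := by
      rw [abs_div, abs_of_nonneg hnpos.le]
    have h3 : |(x n : ℝ)| + 1 ≤ (s.card : ℝ) := by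
      have := card_lower x h0 hinc n
      have h4 : |(x n : ℝ)| = ((|x n| : ℤ) : ℝ) := by push_cast; ring
      rw [h4]
      exact_mod_cast this
    have h5 : |(x n : ℝ)| / n ≤ (s.card : ℝ) / n := by gcongr; linarith
    rw [h2] at h1
    linarith [h1.1]
  -- upper bound
  have hub : (s.card : ℝ) / n < |ℓ| + ε := by
    have hsub : s ⊆ Finset.Icc (s.min' hsne) (s.max' hsne) :=
      fun y hy => Finset.mem_Icc.mpr ⟨s.min'_le y hy, s.le_max' y hy⟩
    have hcard := Finset.card_le_card hsub
    rw [Int.card_Icc] at hcard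
    have hmm : s.min' hsne ≤ s.max' hsne := s.min'_le _ (s.max'_mem hsne)
    have hcardR : (s.card : ℝ) ≤ ((s.max' hsne : ℤ) : ℝ) + 1 - ((s.min' hsne : ℤ) : ℝ) := by
      have h6 : ((s.max' hsne + 1 - s.min' hsne).toNat : ℤ) = s.max' hsne + 1 - s.min' hsne :=
        Int.toNat_of_nonneg (by omega)
      have h7 : (s.card : ℤ) ≤ s.max' hsne + 1 - s.min' hsne := by
        rw [← h6]; exact_mod_cast hcard
      exact_mod_cast h7
    obtain ⟨k₁, hk₁, hxk₁⟩ := Finset.mem_image.mp (s.max'_mem hsne)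
    obtain ⟨k₂, hk₂, hxk₂⟩ := Finset.mem_image.mp (s.min'_mem hsne)
    have hb1 := (key n k₁ (Nat.lt_succ_iff.mp (Finset.mem_range.mp hk₁))).1
    have hb2 := (key n k₂ (Nat.lt_succ_iff.mp (Finset.mem_range.mp hk₂))).2
    rw [hxk₁] at hb1
    rw [hxk₂] at hb2
    have habsℓ : max ℓ 0 - min ℓ 0 = |ℓ| := by
      rcases le_total 0 ℓ with h | h
      · rw [max_eq_left h, min_eq_right h, abs_of_nonneg h]; ring
      · rw [max_eq_right h, min_eq_left h, abs_of_nonpos h]; ring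
    have hcard2 : (s.card : ℝ) ≤ 2 * C + 1 + |ℓ| * n + ε / 2 * n := by
      have : (s.card : ℝ) ≤ 2 * C + 1 + (max ℓ 0 - min ℓ 0) * n + ε / 2 * n := by
        nlinarith [hb1, hb2, hcardR]
      rwa [habsℓ] at this
    have hN2R : (2 * C + 1) * 2 / ε < (n : ℝ) := by
      have : (N₂ : ℝ) ≤ n := by exact_mod_cast hn2
      linarith
    have hsmall : (2 * C + 1) / n < ε / 2 := by
      rw [div_lt_iff₀ hnpos]
      rw [div_lt_iff₀ hε] at hN2R
      nlinarith
    calc (s.card : ℝ) / n ≤ (2 * C + 1 + |ℓ| * n + ε / 2 * n) / n := by gcongr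
      _ = (2 * C + 1) / n + |ℓ| + ε / 2 := by
          rw [add_div, add_div, mul_div_cancel_right₀ _ hnpos.ne', mul_div_cancel_right₀ _ hnpos.ne']
      _ < |ℓ| + ε := by linarith
  rw [Real.dist_eq, abs_lt]
  constructor <;> linarith
end

section
/- Let (x_n) be an integer sequence with |x_{n+1} - x_n| ≤ m for a positive integer m, and suppose x_n / n → ℓ. Then |ℓ|/m ≤ liminf_{n→∞} r_n/n ≤ limsup_{n→∞} r_n/n ≤ min(1, |ℓ|), where r_n = card{x_0, ..., x_n}. -/
open Filter Finset



lemma my_card_mul_ge (x : ℕ → ℤ) (m : ℕ) (hinc : ∀ n, |x (n+1) - x n| ≤ (m:ℤ)) :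
    ∀ n : ℕ, |x n - x 0| ≤ (((range (n+1)).image x).card : ℤ) * m := by
  intro n
  induction n using Nat.strong_induction_on with
  | _ n ih =>
    match n with
    | 0 =>
      simp
    | Nat.succ n =>
      by_cases h : x (n+1) ∈ (range (n+1)).image x
      · obtain ⟨j, hj, hxj⟩ := Finset.mem_image.mp h
        rw [Finset.mem_range] at hj
        calc |x (n+1) - x 0| = |x j - x 0| := by rw [hxj]
          _ ≤ (((range (j+1)).image x).card : ℤ) * m := ih j (by omega)
          _ ≤ (((range (n+1+1)).image x).card : ℤ) * m := by
              gcongr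
      · have hcard : (((range (n+1+1)).image x).card : ℤ)
            = (((range (n+1)).image x).card : ℤ) + 1 := by
          rw [Finset.range_add_one (n := n+1), Finset.image_insert, Finset.card_insert_of_notMem h]
          push_cast; ring
        have h1 := hinc n
        have h2 := ih n (by omega)
        have h3 := abs_sub_abs_le_abs_sub (x (n+1) - x 0) (x (n+1) - x n)
        have h4 : |x (n+1) - x 0| ≤ |x (n+1) - x n| + |x n - x 0| := by
          calc |x (n+1) - x 0| = |(x (n+1) - x n) + (x n - x 0)| := by ring_nf
            _ ≤ |x (n+1) - x n| + |x n - x 0| := abs_add_le _ _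
        rw [hcard]
        nlinarith


lemma my_card_le_of_bounds (x : ℕ → ℤ) (n : ℕ) (a b : ℤ) (h : ∀ k ≤ n, a ≤ x k ∧ x k ≤ b) :
    (((range (n+1)).image x).card : ℤ) ≤ b - a + 1 := by
  have hab : a ≤ b := le_trans (h 0 (by omega)).1 (h 0 (by omega)).2
  have hsub : (range (n+1)).image x ⊆ Finset.Icc a b := by
    intro v hv
    obtain ⟨k, hk, rfl⟩ := Finset.mem_image.mp hv
    rw [Finset.mem_range] at hk
    exact Finset.mem_Icc.mpr ⟨(h k (by omega)).1, (h k (by omega)).2⟩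
  calc (((range (n+1)).image x).card : ℤ) ≤ ((Finset.Icc a b).card : ℤ) := by
        exact_mod_cast Finset.card_le_card hsub
    _ = b - a + 1 := by rw [Int.card_Icc, Int.toNat_of_nonneg (by omega)]; ring

lemma my_approx (x : ℕ → ℤ) (ℓ : ℝ)
    (hlim : Tendsto (fun n : ℕ => (x n : ℝ) / n) atTop (nhds ℓ)) {ε : ℝ} (hε : 0 < ε) :
    ∃ C : ℝ, 0 ≤ C ∧ ∀ k : ℕ, |(x k : ℝ) - ℓ * k| ≤ ε * k + C := by
  obtain ⟨N, hN⟩ := Metric.tendsto_atTop.mp hlim ε hε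
  refine ⟨∑ j ∈ Finset.range (N+1), |(x j : ℝ) - ℓ * j|, by positivity, fun k => ?_⟩
  rcases le_or_gt k N with hk | hk
  · have h1 : |(x k:ℝ) - ℓ*k| ≤ ∑ j ∈ Finset.range (N+1), |(x j:ℝ) - ℓ*j| :=
      Finset.single_le_sum (f := fun j => |(x j:ℝ) - ℓ*j|) (fun _ _ => abs_nonneg _)
        (Finset.mem_range.mpr (by omega))
    have h2 : (0:ℝ) ≤ ε * k := by positivity
    linarith
  · have hkpos : (0:ℝ) < k := by exact Nat.cast_pos.mpr (show 0 < k by omega)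
    have h1 := hN k (by omega)
    rw [Real.dist_eq] at h1
    have heq : (x k:ℝ) - ℓ*k = ((x k:ℝ)/k - ℓ)*k := by field_simp
    have hsum : (0:ℝ) ≤ ∑ j ∈ Finset.range (N+1), |(x j:ℝ) - ℓ*j| := by positivity
    rw [heq, abs_mul, abs_of_pos hkpos]
    nlinarith


theorem stmt2 (x : ℕ → ℤ) (m : ℕ) (hm : 0 < m)
    (hinc : ∀ n, |x (n + 1) - x n| ≤ (m : ℤ)) (ℓ : ℝ)
    (hlim : Tendsto (fun n : ℕ => (x n : ℝ) / n) atTop (nhds ℓ)) :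
    |ℓ| / m ≤ liminf (fun n : ℕ => (((Finset.range (n + 1)).image x).card : ℝ) / n) atTop ∧
      liminf (fun n : ℕ => (((Finset.range (n + 1)).image x).card : ℝ) / n) atTop ≤
        limsup (fun n : ℕ => (((Finset.range (n + 1)).image x).card : ℝ) / n) atTop ∧
      limsup (fun n : ℕ => (((Finset.range (n + 1)).image x).card : ℝ) / n) atTop ≤
        min 1 |ℓ| := by
  set u : ℕ → ℝ := fun n : ℕ => (((Finset.range (n + 1)).image x).card : ℝ) / n with hu
  have hmR : (0:ℝ) < m := by exact_mod_cast hm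
  have hm1 : (1:ℝ) ≤ m := by exact_mod_cast hm
  have hub : ∀ n, u n ≤ 2 := by
    intro n
    match n with
    | 0 => simp [hu]
    | Nat.succ n =>
      have hnR : (0:ℝ) < ((n+1 : ℕ):ℝ) := by positivity
      rw [hu]
      simp only
      rw [div_le_iff₀ hnR]
      have h1 : ((Finset.range (n+1+1)).image x).card ≤ n + 2 := by
        calc ((Finset.range (n+1+1)).image x).card ≤ (Finset.range (n+1+1)).card :=
              Finset.card_image_le
          _ = n + 2 := Finset.card_range _
      have h2 : (((Finset.range (n+1+1)).image x).card : ℝ) ≤ (n:ℝ) + 2 := by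
        exact_mod_cast h1
      push_cast
      linarith
  have hlb : ∀ n, 0 ≤ u n := fun n => by rw [hu]; positivity
  have hbdd : IsBoundedUnder (· ≤ ·) atTop u := isBoundedUnder_of ⟨2, hub⟩
  have hbdd' : IsBoundedUnder (· ≥ ·) atTop u := isBoundedUnder_of ⟨0, hlb⟩
  have hcob_le : IsCoboundedUnder (· ≤ ·) atTop u := hbdd'.isCoboundedUnder_le
  have hcob_ge : IsCoboundedUnder (· ≥ ·) atTop u := hbdd.isCoboundedUnder_ge
  refine ⟨?_, liminf_le_limsup hbdd hbdd', le_min ?_ ?_⟩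
  · -- |ℓ|/m ≤ liminf
    refine le_of_forall_pos_le_add fun ε hε => ?_
    have hε₁ : 0 < ε * m / 2 := by positivity
    obtain ⟨C, hC0, hC⟩ := my_approx x ℓ hlim hε₁
    set A : ℝ := C + |((x 0 : ℤ) : ℝ)| with hA
    have hA0 : 0 ≤ A := by positivity
    have key : ∀ᶠ n in atTop, |ℓ|/m - ε ≤ u n := by
      rw [eventually_atTop]
      refine ⟨⌈2*A/ε⌉₊ + 1, fun n hn => ?_⟩
      have hn1 : 1 ≤ n := by omega
      have hnR : (0:ℝ) < n := by exact_mod_cast hn1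
      have hnA : 2*A/ε ≤ (n:ℝ) := by
        calc 2*A/ε ≤ (⌈2*A/ε⌉₊ : ℝ) := Nat.le_ceil _
          _ ≤ (n:ℝ) := by exact_mod_cast Nat.le_of_succ_le hn
      have hA2 : 2*A ≤ ε * n := by
        rw [div_le_iff₀ hε] at hnA; linarith
      have h1 : |((x n : ℤ):ℝ) - ((x 0 : ℤ):ℝ)| ≤
          ((((Finset.range (n+1)).image x).card : ℕ):ℝ) * m := by
        exact_mod_cast my_card_mul_ge x m hinc n
      have h2 := hC n
      have t1 := abs_sub_abs_le_abs_sub (ℓ*(n:ℝ)) ((x n : ℤ):ℝ)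
      have t2 := abs_sub_abs_le_abs_sub ((x n : ℤ):ℝ) ((x 0 : ℤ):ℝ)
      have t3 : |ℓ*(n:ℝ)| = |ℓ| * (n:ℝ) := by
        rw [abs_mul, abs_of_pos hnR]
      have t4 : |ℓ*(n:ℝ) - ((x n:ℤ):ℝ)| = |((x n:ℤ):ℝ) - ℓ*n| := abs_sub_comm _ _
      have hS : |ℓ| * n ≤ ((((Finset.range (n+1)).image x).card : ℕ):ℝ) * m + ε * n * m := by
        nlinarith
      rw [hu]
      simp only
      rw [sub_le_iff_le_add, div_le_iff₀ hmR]
      have hcn : ((((Finset.range (n+1)).image x).card : ℕ):ℝ)/n * n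
          = ((((Finset.range (n+1)).image x).card : ℕ):ℝ) :=
        div_mul_cancel₀ _ (ne_of_gt hnR)
      nlinarith [hlb n, hu ▸ hlb n]
    have h5 : |ℓ|/m - ε ≤ liminf u atTop := le_liminf_of_le hcob_ge key
    linarith
  · -- limsup ≤ 1
    refine le_of_forall_pos_le_add fun ε hε => ?_
    refine limsup_le_of_le hcob_le ?_
    rw [eventually_atTop]
    refine ⟨⌈1/ε⌉₊ + 1, fun n hn => ?_⟩
    have hn1 : 1 ≤ n := by omega
    have hnR : (0:ℝ) < n := by exact_mod_cast hn1
    have hnε : 1/ε ≤ (n:ℝ) := by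
      calc 1/ε ≤ (⌈1/ε⌉₊ : ℝ) := Nat.le_ceil _
        _ ≤ (n:ℝ) := by exact_mod_cast Nat.le_of_succ_le hn
    have h1 : (1:ℝ) ≤ ε * n := by rw [div_le_iff₀ hε] at hnε; linarith
    have h2 : (((Finset.range (n+1)).image x).card : ℝ) ≤ (n:ℝ) + 1 := by
      have : ((Finset.range (n+1)).image x).card ≤ n + 1 := by
        calc ((Finset.range (n+1)).image x).card ≤ (Finset.range (n+1)).card :=
              Finset.card_image_le
          _ = n + 1 := Finset.card_range _
      exact_mod_cast this
    rw [hu]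
    simp only
    rw [div_le_iff₀ hnR]
    linarith
  · -- limsup ≤ |ℓ|
    refine le_of_forall_pos_le_add fun ε hε => ?_
    refine limsup_le_of_le hcob_le ?_
    have hε₁ : 0 < ε / 4 := by positivity
    obtain ⟨C, hC0, hC⟩ := my_approx x ℓ hlim hε₁
    rw [eventually_atTop]
    refine ⟨⌈2*(2*C+2)/ε⌉₊ + 1, fun n hn => ?_⟩
    have hn1 : 1 ≤ n := by omega
    have hnR : (0:ℝ) < n := by exact_mod_cast hn1
    have hnA : 2*(2*C+2)/ε ≤ (n:ℝ) := by
      calc 2*(2*C+2)/ε ≤ (⌈2*(2*C+2)/ε⌉₊ : ℝ) := Nat.le_ceil _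
        _ ≤ (n:ℝ) := by exact_mod_cast Nat.le_of_succ_le hn
    have hA2 : 2*(2*C+2) ≤ ε * n := by rw [div_le_iff₀ hε] at hnA; linarith
    set ar : ℝ := min ℓ 0 * n - ε/4*n - C with har
    set br : ℝ := max ℓ 0 * n + ε/4*n + C with hbr
    have hbounds : ∀ k ≤ n, ⌈ar⌉ ≤ x k ∧ x k ≤ ⌊br⌋ := by
      intro k hk
      have hkn : (k:ℝ) ≤ n := by exact_mod_cast hk
      have hk0 : (0:ℝ) ≤ k := Nat.cast_nonneg k
      have h2 := hC k
      have habs := abs_le.mp h2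
      have hup : ℓ * k ≤ max ℓ 0 * n :=
        le_trans (mul_le_mul_of_nonneg_right (le_max_left ℓ 0) hk0)
          (mul_le_mul_of_nonneg_left hkn (le_max_right ℓ 0))
      have hdown : min ℓ 0 * n ≤ ℓ * k := by
        have s1 : min ℓ 0 * n ≤ min ℓ 0 * k :=
          mul_le_mul_of_nonpos_left hkn (min_le_right ℓ 0)
        have s2 : min ℓ 0 * k ≤ ℓ * k :=
          mul_le_mul_of_nonneg_right (min_le_left ℓ 0) hk0
        linarith
      have hεk : ε/4 * k ≤ ε/4 * n :=
        mul_le_mul_of_nonneg_left hkn (by positivity)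
      constructor
      · rw [Int.ceil_le]
        push_cast
        rw [har]
        linarith [habs.2, habs.1]
      · rw [Int.le_floor]
        push_cast
        rw [hbr]
        linarith [habs.2]
    have hcard := my_card_le_of_bounds x n ⌈ar⌉ ⌊br⌋ hbounds
    have hcardR : ((((Finset.range (n+1)).image x).card : ℕ):ℝ)
        ≤ ((⌊br⌋:ℝ)) - ((⌈ar⌉:ℝ)) + 1 := by exact_mod_cast hcard
    have hfl : ((⌊br⌋:ℝ)) ≤ br := Int.floor_le br
    have hcl : ar ≤ ((⌈ar⌉:ℝ)) := Int.le_ceil ar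
    have hmaxmin : max ℓ 0 - min ℓ 0 = |ℓ| := by
      rw [max_sub_min_eq_abs, zero_sub, abs_neg]
    clear_value ar br
    have hcard2 : ((((Finset.range (n+1)).image x).card : ℕ):ℝ)
        ≤ |ℓ| * n + ε/2 * n + 2*C + 1 := by
      have : br - ar = |ℓ| * n + ε/2*n + 2*C := by
        rw [hbr, har]; linear_combination (n:ℝ) * hmaxmin
      linarith
    rw [hu]
    simp only
    rw [div_le_iff₀ hnR]
    linarith
end

section
/- Let (x_n) be an integer sequence with |x_{n+1} - x_n| ≤ m for a positive integer m, and let r_n = card{x_0, ..., x_n}. The following are equivalent: (1) (max_{0 ≤ k ≤ n} |x_k|)/n → 0; (2) x_n/n → 0; (3) r_n/n → 0. -/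
open Filter

private lemma key_ivt (x : ℕ → ℤ) (m : ℕ) (hinc : ∀ n, |x (n+1) - x n| ≤ (m:ℤ)) (n : ℕ) (v : ℤ)
    (h1 : min (x 0) (x n) ≤ v) (h2 : v ≤ max (x 0) (x n)) :
    ∃ k ≤ n, x k - m ≤ v ∧ v ≤ x k + m := by
  induction n with
  | zero => exact ⟨0, le_refl _, by omega⟩
  | succ n ih =>
    have h := hinc n
    rw [abs_le] at h
    by_cases hc : min (x 0) (x n) ≤ v ∧ v ≤ max (x 0) (x n)
    · obtain ⟨k, hk, hb⟩ := ih hc.1 hc.2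
      exact ⟨k, hk.trans n.le_succ, hb⟩
    · exact ⟨n+1, le_refl _, by omega⟩

private lemma key_count (x : ℕ → ℤ) (m : ℕ) (hinc : ∀ n, |x (n+1) - x n| ≤ (m:ℤ)) (n : ℕ) :
    |x n| ≤ |x 0| + (((Finset.range (n+1)).image x).card : ℤ) * (2*m+1) := by
  set S := (Finset.range (n+1)).image x with hS
  have hsub : Finset.Icc (min (x 0) (x n)) (max (x 0) (x n)) ⊆
      S.biUnion (fun s => Finset.Icc (s - m) (s + m)) := by
    intro v hv
    rw [Finset.mem_Icc] at hv
    obtain ⟨k, hk, hb1, hb2⟩ := key_ivt x m hinc n v hv.1 hv.2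
    rw [Finset.mem_biUnion]
    exact ⟨x k, Finset.mem_image_of_mem x (Finset.mem_range.mpr (Nat.lt_succ_of_le hk)),
      Finset.mem_Icc.mpr ⟨hb1, hb2⟩⟩
  have hcard := (Finset.card_le_card hsub).trans (Finset.card_biUnion_le)
  rw [Int.card_Icc] at hcard
  have h2 : ∀ s : ℤ, (Finset.Icc (s - (m:ℤ)) (s + m)).card = 2*m+1 := fun s => by
    rw [Int.card_Icc]; omega
  rw [Finset.sum_congr rfl (fun s _ => h2 s), Finset.sum_const, smul_eq_mul] at hcard
  have h3 : max (x 0) (x n) + 1 - min (x 0) (x n) ≤ (S.card : ℤ) * (2*m+1) := by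
    have h5 : 0 ≤ max (x 0) (x n) + 1 - min (x 0) (x n) := by
      have := le_max_left (x 0) (x n); have := min_le_left (x 0) (x n); omega
    have h4 : ((max (x 0) (x n) + 1 - min (x 0) (x n)).toNat : ℤ) ≤ ((S.card * (2*m+1) : ℕ) : ℤ) := by
      exact_mod_cast hcard
    rw [Int.toNat_of_nonneg h5] at h4
    push_cast at h4
    linarith
  have habs : max (x 0) (x n) - min (x 0) (x n) = |x n - x 0| := by
    rw [max_sub_min_eq_abs, abs_sub_comm]
  linarith [abs_sub_abs_le_abs_sub (x n) (x 0), h3, abs_nonneg (x 0)]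

theorem stmt3 (x : ℕ → ℤ) (m : ℕ) (hm : 0 < m)
    (hinc : ∀ n, |x (n + 1) - x n| ≤ (m : ℤ)) :
    (Tendsto (fun n : ℕ =>
        (((Finset.range (n + 1)).sup' ⟨0, Finset.mem_range.mpr n.succ_pos⟩
          (fun k => |x k|) : ℤ) : ℝ) / n) atTop (nhds 0) ↔
      Tendsto (fun n : ℕ => (x n : ℝ) / n) atTop (nhds 0)) ∧
    (Tendsto (fun n : ℕ => (x n : ℝ) / n) atTop (nhds 0) ↔
      Tendsto (fun n : ℕ => (((Finset.range (n + 1)).image x).card : ℝ) / n)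
        atTop (nhds 0)) := by
  set M : ℕ → ℤ := fun n => (Finset.range (n + 1)).sup' ⟨0, Finset.mem_range.mpr n.succ_pos⟩
          (fun k => |x k|) with hM
  set r : ℕ → ℕ := fun n => ((Finset.range (n + 1)).image x).card with hr
  have hxM : ∀ k n, k ≤ n → |x k| ≤ M n := fun k n hk =>
    Finset.le_sup' (f := fun k => |x k|) (Finset.mem_range.mpr (Nat.lt_succ_of_le hk))
  have hMnonneg : ∀ n, 0 ≤ M n := fun n => (abs_nonneg (x n)).trans (hxM n n le_rfl)
  -- (1) → (2)
  have h12 : Tendsto (fun n : ℕ => ((M n : ℤ) : ℝ) / n) atTop (nhds 0) →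
      Tendsto (fun n : ℕ => (x n : ℝ) / n) atTop (nhds 0) := by
    intro h
    apply squeeze_zero_norm _ h
    intro n
    rw [norm_div, Real.norm_natCast, Real.norm_eq_abs]
    gcongr
    exact_mod_cast hxM n n le_rfl
  -- (2) → (1)
  have h21 : Tendsto (fun n : ℕ => (x n : ℝ) / n) atTop (nhds 0) →
      Tendsto (fun n : ℕ => ((M n : ℤ) : ℝ) / n) atTop (nhds 0) := by
    intro h
    rw [NormedAddCommGroup.tendsto_nhds_zero] at h ⊢
    intro ε hε
    obtain ⟨N₀, hN₀⟩ := eventually_atTop.mp (h (ε/2) (by positivity))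
    set N := max N₀ 1 with hN
    have h2 : ∀ᶠ n : ℕ in atTop, ((M N : ℤ) : ℝ) / n < ε / 2 :=
      (tendsto_const_div_atTop_nhds_zero_nat _).eventually_lt_const (by positivity)
    filter_upwards [h2, eventually_ge_atTop N] with n hn2 hnN
    have hMn : (0:ℝ) ≤ ((M n : ℤ) : ℝ) / n := by
      have := hMnonneg n
      positivity
    rw [Real.norm_eq_abs, abs_of_nonneg hMn]
    obtain ⟨k, hk, hMk⟩ := Finset.exists_mem_eq_sup' (⟨0, Finset.mem_range.mpr n.succ_pos⟩ :
      (Finset.range (n+1)).Nonempty) (fun k => |x k|)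
    have hkn : k ≤ n := Nat.lt_succ_iff.mp (Finset.mem_range.mp hk)
    have hMnk : M n = |x k| := hMk
    rw [hMnk]
    rcases le_or_gt N k with hcase | hcase
    · have h5 := hN₀ k (le_trans (le_max_left _ _) hcase)
      rw [norm_div, Real.norm_natCast, Real.norm_eq_abs] at h5
      have hk1 : (1:ℕ) ≤ k := le_trans (le_max_right N₀ 1) hcase
      have hstep : ((|x k| : ℤ) : ℝ) / n ≤ ((|x k| : ℤ) : ℝ) / k := by
        have hk1' : (1:ℝ) ≤ (k:ℕ) := by exact_mod_cast hk1
        have hkn' : ((k:ℕ):ℝ) ≤ (n:ℕ) := by exact_mod_cast hkn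
        gcongr
      rw [Int.cast_abs] at hstep ⊢
      linarith
    · have hle : |x k| ≤ M N := hxM k N (le_of_lt hcase)
      have hstep : ((|x k| : ℤ) : ℝ) / n ≤ ((M N : ℤ) : ℝ) / n := by
        gcongr
      linarith
  -- (1) → (3)
  have h13 : Tendsto (fun n : ℕ => ((M n : ℤ) : ℝ) / n) atTop (nhds 0) →
      Tendsto (fun n : ℕ => ((r n : ℕ) : ℝ) / n) atTop (nhds 0) := by
    intro h
    have hrM : ∀ n, ((r n : ℕ) : ℤ) ≤ 2 * M n + 1 := by
      intro n
      have hsub : (Finset.range (n+1)).image x ⊆ Finset.Icc (-(M n)) (M n) := by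
        intro v hv
        obtain ⟨k, hk, rfl⟩ := Finset.mem_image.mp hv
        have := abs_le.mp (hxM k n (Nat.lt_succ_iff.mp (Finset.mem_range.mp hk)))
        exact Finset.mem_Icc.mpr this
      have := Finset.card_le_card hsub
      rw [Int.card_Icc] at this
      have h5 : ((r n : ℕ) : ℤ) ≤ ((M n + 1 - -(M n)).toNat : ℤ) := by exact_mod_cast this
      rw [Int.toNat_of_nonneg (by linarith [hMnonneg n])] at h5
      linarith
    have hg : Tendsto (fun n : ℕ => 2 * (((M n : ℤ) : ℝ) / n) + 1 / n) atTop (nhds 0) := by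
      have := (h.const_mul 2).add (tendsto_const_div_atTop_nhds_zero_nat 1)
      simpa using this
    apply squeeze_zero_norm _ hg
    intro n
    rw [norm_div, Real.norm_natCast, Real.norm_natCast]
    have hb : ((r n : ℕ) : ℝ) ≤ 2 * ((M n : ℤ) : ℝ) + 1 := by exact_mod_cast hrM n
    calc ((r n : ℕ) : ℝ) / n ≤ (2 * ((M n : ℤ) : ℝ) + 1) / n := by
          gcongr
      _ = 2 * (((M n : ℤ) : ℝ) / n) + 1 / n := by ring
  -- (3) → (2)
  have h32 : Tendsto (fun n : ℕ => ((r n : ℕ) : ℝ) / n) atTop (nhds 0) →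
      Tendsto (fun n : ℕ => (x n : ℝ) / n) atTop (nhds 0) := by
    intro h
    have hg : Tendsto (fun n : ℕ => ((|x 0| : ℤ) : ℝ) / n + (2*m+1) * (((r n : ℕ) : ℝ) / n))
        atTop (nhds 0) := by
      have := (tendsto_const_div_atTop_nhds_zero_nat ((|x 0| : ℤ) : ℝ)).add
        (h.const_mul ((2*m+1 : ℕ) : ℝ))
      simpa [mul_comm] using this
    apply squeeze_zero_norm _ hg
    intro n
    rw [norm_div, Real.norm_natCast, Real.norm_eq_abs]
    have hb : |x n| ≤ |x 0| + ((r n : ℕ) : ℤ) * (2*m+1) := key_count x m hinc n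
    rw [mul_comm] at hb
    have hb' : |(x n : ℝ)| ≤ ((|x 0| : ℤ) : ℝ) + (2*m+1) * ((r n : ℕ) : ℝ) := by
      exact_mod_cast hb
    calc |(x n : ℝ)| / n ≤ (((|x 0| : ℤ) : ℝ) + (2*m+1) * ((r n : ℕ) : ℝ)) / n := by
          gcongr
      _ = ((|x 0| : ℤ) : ℝ) / n + (2*m+1) * (((r n : ℕ) : ℝ) / n) := by ring
  exact ⟨⟨h12, h21⟩, ⟨fun h => h13 (h21 h), fun h => h12 (h21 (h32 h))⟩⟩
end

section
/- Define x_k piecewise by: for τ_{n-1} ≤ k < t_n, x_k = k - τ_{n-1}, and for t_n ≤ k < τ_n, x_k = τ_n - k, where τ_n = 2·3^n (with τ_{-1} = 0) and t_n = (τ_n + τ_{n-1})/2. Then (x_n) is an integer sequence with x_0 = 0, |x_{k+1} - x_k| ≤ 1 for all k, x_{τ_n} = 0 for all n (so x hits 0 infinitely often), and limsup_{n→∞} x_n/n ≥ 1/2. -/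
open Filter

/-- τ_{-1} = 0 shifted by one: `tauSeq 0 = 0` and `tauSeq (n+1) = 2 * 3 ^ n`,
so `tauSeq (n+1)` is the τ_n = 2·3^n of the paper. -/
def tauSeq (n : ℕ) : ℕ := if n = 0 then 0 else 2 * 3 ^ (n - 1)

/-- Index of the block `[tauSeq n, tauSeq (n+1))` containing `k`. -/
def blk (k : ℕ) : ℕ := Nat.findGreatest (fun n => tauSeq n ≤ k) k

/-- The explicit tent-shaped sequence: on the block `[τ_{n-1}, τ_n)` it equals
`k - τ_{n-1}` for `k < t_n = (τ_{n-1} + τ_n)/2` and `τ_n - k` for `k ≥ t_n`. -/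
def xseq (k : ℕ) : ℤ := min ((k : ℤ) - (tauSeq (blk k) : ℤ)) ((tauSeq (blk k + 1) : ℤ) - k)

lemma tauSeq_succ (n : ℕ) : tauSeq (n + 1) = 2 * 3 ^ n := by simp [tauSeq]

lemma tauSeq_lt_succ (n : ℕ) : tauSeq n < tauSeq (n + 1) := by
  cases n with
  | zero => simp [tauSeq]
  | succ m =>
    rw [tauSeq_succ, tauSeq_succ]
    have h := Nat.pow_lt_pow_succ (by norm_num : 1 < 3) (n := m)
    omega

lemma tauSeq_strictMono : StrictMono tauSeq :=
  strictMono_nat_of_lt_succ tauSeq_lt_succ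

lemma self_le_tauSeq (n : ℕ) : n ≤ tauSeq n := by
  cases n with
  | zero => simp [tauSeq]
  | succ m =>
    rw [tauSeq_succ]
    have h : m < 3 ^ m := Nat.lt_pow_self (by norm_num)
    omega

lemma blk_spec (k : ℕ) : tauSeq (blk k) ≤ k ∧ k < tauSeq (blk k + 1) := by
  constructor
  · exact Nat.findGreatest_spec (P := fun n => tauSeq n ≤ k) (Nat.zero_le k) (by simp [tauSeq])
  · by_contra h
    push_neg at h
    have h2 : blk k + 1 ≤ k := le_trans (self_le_tauSeq _) h
    have hcontr : blk k + 1 ≤ blk k := Nat.le_findGreatest h2 h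
    omega

lemma blk_eq {n k : ℕ} (h1 : tauSeq n ≤ k) (h2 : k < tauSeq (n + 1)) : blk k = n := by
  have hs := blk_spec k
  refine le_antisymm ?_ (Nat.le_findGreatest (le_trans (self_le_tauSeq n) h1) h1)
  by_contra h
  push_neg at h
  have h3 : tauSeq (n + 1) ≤ tauSeq (blk k) := tauSeq_strictMono.monotone h
  exact absurd hs.1 (Nat.not_le.mpr (lt_of_lt_of_le h2 h3))

lemma xseq_tau (n : ℕ) : xseq (tauSeq (n + 1)) = 0 := by
  have hb : blk (tauSeq (n + 1)) = n + 1 := blk_eq le_rfl (tauSeq_lt_succ (n + 1))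
  have hlt := tauSeq_lt_succ (n + 1)
  simp only [xseq, hb]
  have : (tauSeq (n + 1) : ℤ) ≤ tauSeq (n + 2) := by exact_mod_cast hlt.le
  omega

theorem stmt5 :
    xseq 0 = 0 ∧
    (∀ k, |xseq (k + 1) - xseq k| ≤ 1) ∧
    (∀ n, xseq (2 * 3 ^ n) = 0) ∧
    (∀ N, ∃ k > N, xseq k = 0) ∧
    (1 / 2 : ℝ) ≤ limsup (fun n : ℕ => (xseq n : ℝ) / n) atTop := by
  have htau : ∀ n, tauSeq (n + 1) = 2 * 3 ^ n := by intro n; simp [tauSeq]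
  have hzero : ∀ n, xseq (2 * 3 ^ n) = 0 := by
    intro n; rw [← htau n]; exact xseq_tau n
  refine ⟨?_, ?_, hzero, ?_, ?_⟩
  · have hb : blk 0 = 0 := blk_eq (by simp [tauSeq]) (by simp [tauSeq])
    simp [xseq, hb, tauSeq]
  · intro k
    have hs := blk_spec k
    by_cases h : k + 1 < tauSeq (blk k + 1)
    · have hb : blk (k + 1) = blk k := blk_eq (le_trans hs.1 (Nat.le_succ k)) h
      simp only [xseq, hb]
      have c1 : (tauSeq (blk k) : ℤ) ≤ k := by exact_mod_cast hs.1
      have c2 : (k : ℤ) + 1 < tauSeq (blk k + 1) := by exact_mod_cast h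
      rw [abs_le]
      push_cast
      omega
    · have he : k + 1 = tauSeq (blk k + 1) := by omega
      have hb : blk (k + 1) = blk k + 1 := by
        refine blk_eq he.ge ?_
        have := tauSeq_lt_succ (blk k + 1)
        omega
      simp only [xseq, hb]
      have c1 : (tauSeq (blk k) : ℤ) ≤ k := by exact_mod_cast hs.1
      have c2 : ((k : ℤ) + 1) = tauSeq (blk k + 1) := by exact_mod_cast he
      have c3 : (tauSeq (blk k + 1) : ℤ) < tauSeq (blk k + 1 + 1) := by
        exact_mod_cast tauSeq_lt_succ (blk k + 1)
      rw [abs_le]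
      push_cast
      omega
  · intro N
    refine ⟨2 * 3 ^ N, ?_, hzero N⟩
    have h : N < 3 ^ N := Nat.lt_pow_self (by norm_num)
    omega
  · have key : ∀ m : ℕ, xseq (4 * 3 ^ m) = 2 * 3 ^ m := by
      intro m
      have h1 : tauSeq (m + 1) ≤ 4 * 3 ^ m := by
        rw [htau m]
        have : 0 < 3 ^ m := Nat.pow_pos (by norm_num)
        omega
      have h2 : 4 * 3 ^ m < tauSeq (m + 2) := by
        rw [htau (m + 1)]
        have : 0 < 3 ^ m := Nat.pow_pos (by norm_num)
        rw [pow_succ]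
        omega
      have hb : blk (4 * 3 ^ m) = m + 1 := blk_eq h1 h2
      simp only [xseq, hb, htau m, htau (m + 1)]
      push_cast [pow_succ]
      have : (0 : ℤ) < 3 ^ m := by positivity
      set t : ℤ := (3 : ℤ) ^ m with ht
      omega
    apply le_limsup_of_frequently_le
    · rw [frequently_atTop]
      intro a
      refine ⟨4 * 3 ^ a, ?_, ?_⟩
      · have h : a < 3 ^ a := Nat.lt_pow_self (by norm_num)
        omega
      · rw [key a]
        have h3 : ((3 : ℝ) ^ a) ≠ 0 := by positivity
        have : ((2 * 3 ^ a : ℤ) : ℝ) / ((4 * 3 ^ a : ℕ) : ℝ) = 1 / 2 := by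
          push_cast
          field_simp
          ring
        rw [this]
    · refine isBoundedUnder_of ⟨1, fun n => ?_⟩
      have hx : xseq n ≤ n := by
        have c1 : (tauSeq (blk n) : ℤ) ≥ 0 := Int.natCast_nonneg _
        exact le_trans (min_le_left _ _) (by omega)
      rcases Nat.eq_zero_or_pos n with h | h
      · simp [h]
      · rw [div_le_one (by exact_mod_cast h)]
        exact_mod_cast hx
end

section
/- Let (x_n) be an integer sequence with x_0 = 0, |x_{n+1} - x_n| ≤ 1 for all n, which hits 0 at an infinite increasing sequence of times τ_0 < τ_1 < τ_2 < ... (i.e., x_{τ_k} = 0 for all k, and these are the zeros of x). Then limsup_{n→∞} |x_n|/n ≤ limsup_{k→∞} (1/2)(τ_k/τ_{k-1} - 1). -/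
open Filter

theorem stmt7 (x : ℕ → ℤ) (h0 : x 0 = 0)
    (hinc : ∀ n, |x (n + 1) - x n| ≤ 1)
    (τ : ℕ → ℕ) (hmono : StrictMono τ)
    (hzero : ∀ k, x (τ k) = 0)
    (hall : ∀ n, x n = 0 → ∃ k, τ k = n) :
    limsup (fun n : ℕ => (((|x n| : ℤ) : ℝ) / n : EReal)) atTop ≤
      limsup (fun k : ℕ =>
        (((1 / 2 : ℝ) * ((τ (k + 1) : ℝ) / (τ k : ℝ) - 1) : ℝ) : EReal)) atTop := by
  -- step bound
  have hdiff : ∀ n m : ℕ, m ≤ n → |x n - x m| ≤ (n : ℤ) - m := by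
    intro n
    induction n with
    | zero => intro m hm; interval_cases m; simp
    | succ n ih =>
      intro m hm
      rcases Nat.lt_or_ge m (n + 1) with h | h
      · have h1 := ih m (Nat.lt_succ_iff.mp h)
        have h2 := hinc n
        have : |x (n+1) - x m| ≤ |x (n+1) - x n| + |x n - x m| := by
          have := abs_sub_abs_le_abs_sub (x (n+1) - x m) (x n - x m)
          calc |x (n+1) - x m| = |(x (n+1) - x n) + (x n - x m)| := by ring_nf
            _ ≤ |x (n+1) - x n| + |x n - x m| := abs_add_le _ _
        have hc : ((n:ℤ)+1) - m = 1 + ((n:ℤ) - m) := by ring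
        push_cast
        rw [hc]
        exact this.trans (add_le_add h2 h1)
      · have : m = n + 1 := le_antisymm hm h
        subst this; simp
  have hτ0 : τ 0 = 0 := by
    obtain ⟨k, hk⟩ := hall 0 h0
    have h1 : τ 0 ≤ τ k := hmono.monotone (Nat.zero_le k)
    omega
  set K : ℕ → ℕ := fun n => Nat.findGreatest (fun k => τ k ≤ n) n with hK
  have hKle : ∀ n, τ (K n) ≤ n := by
    intro n
    exact Nat.findGreatest_spec (P := fun k => τ k ≤ n) (Nat.zero_le n) (by show τ 0 ≤ n; rw [hτ0]; exact Nat.zero_le n)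
  have hKlt : ∀ n, n < τ (K n + 1) := by
    intro n
    by_contra h
    push_neg at h
    have h2 : K n + 1 ≤ n := le_trans (hmono.le_apply) h
    exact Nat.findGreatest_is_greatest (Nat.lt_succ_self _) h2 h
  have hKge : ∀ m n, τ m ≤ n → m ≤ K n := by
    intro m n h
    exact Nat.le_findGreatest (le_trans hmono.le_apply h) h
  have hKtend : Tendsto K atTop atTop := by
    rw [tendsto_atTop]
    intro b
    filter_upwards [eventually_ge_atTop (τ b)] with n hn
    exact hKge b n hn
  set g : ℕ → EReal := fun k =>
    (((1 / 2 : ℝ) * ((τ (k + 1) : ℝ) / (τ k : ℝ) - 1) : ℝ) : EReal) with hg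
  have hmain : ∀ᶠ n in atTop,
      (((|x n| : ℤ) : ℝ) / n : EReal) ≤ g (K n) := by
    filter_upwards [eventually_ge_atTop (τ 1)] with n hn
    set k := K n with hk
    have hk1 : 1 ≤ k := hKge 1 n hn
    have hτk : 1 ≤ τ k := by
      have h01 : τ 0 < τ 1 := hmono (Nat.lt_succ_self 0)
      have := hmono.monotone hk1
      omega
    have h1 : τ k ≤ n := hKle n
    have h2 : n < τ (k + 1) := hKlt n
    -- 2 |x n| ≤ τ (k+1) - τ k
    have ha : |x n| ≤ (n : ℤ) - τ k := by
      have := hdiff n (τ k) h1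
      rwa [hzero k, sub_zero] at this
    have hb : |x n| ≤ (τ (k+1) : ℤ) - n := by
      have := hdiff (τ (k+1)) n (le_of_lt h2)
      rwa [hzero (k+1), zero_sub, abs_neg] at this
    have hsum : 2 * |x n| ≤ (τ (k+1) : ℤ) - τ k := by omega
    -- pass to reals
    show (((|x n| : ℤ) : ℝ) / n : EReal) ≤
      (((1 / 2 : ℝ) * ((τ (k + 1) : ℝ) / (τ k : ℝ) - 1) : ℝ) : EReal)
    rw [← EReal.coe_coe_eq_natCast, ← EReal.coe_div, EReal.coe_le_coe_iff]
    have hτkR : (0:ℝ) < (τ k : ℝ) := by exact_mod_cast hτk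
    have hnR : (0:ℝ) < (n : ℝ) := by
      have : 1 ≤ n := le_trans hτk h1
      exact_mod_cast this
    have h1R : (τ k : ℝ) ≤ (n : ℝ) := by exact_mod_cast h1
    have hsumR : 2 * ((|x n| : ℤ) : ℝ) ≤ (τ (k+1) : ℝ) - (τ k : ℝ) := by
      exact_mod_cast hsum
    have haR : (0:ℝ) ≤ ((|x n| : ℤ) : ℝ) := by positivity
    have heq : (1 / 2 : ℝ) * ((τ (k + 1) : ℝ) / (τ k : ℝ) - 1)
        = ((τ (k+1) : ℝ) - τ k) / (2 * τ k) := by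
      field_simp
    rw [heq, div_le_div_iff₀ hnR (by positivity)]
    nlinarith
  calc limsup (fun n : ℕ => (((|x n| : ℤ) : ℝ) / n : EReal)) atTop
      ≤ limsup (g ∘ K) atTop := limsup_le_limsup hmain
    _ = limsup g (map K atTop) := limsup_comp g K atTop
    _ ≤ limsup g atTop := limsup_le_limsup_of_le hKtend
end

section
/- Let (x_n) be an integer sequence with |x_{n+1} - x_n| ≤ 1 for all n, hitting 0 at infinitely many times τ_0 < τ_1 < ... . If τ_k/τ_{k-1} → 1 as k → ∞, then x_n/n → 0. -/
open Filter

lemma stmt8_aux (x : ℕ → ℤ) (hinc : ∀ n, |x (n + 1) - x n| ≤ 1) :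
    ∀ n m, m ≤ n → |x n - x m| ≤ (n : ℤ) - m := by
  intro n
  induction n with
  | zero =>
    intro m hm
    interval_cases m
    simp
  | succ n ih =>
    intro m hm
    rcases Nat.eq_or_lt_of_le hm with h' | h'
    · subst h'; simp
    · have h2 := ih m (Nat.lt_succ_iff.mp h')
      calc |x (n + 1) - x m| ≤ |x (n + 1) - x n| + |x n - x m| := by
            have := abs_sub_le (x (n+1)) (x n) (x m); linarith [this]
        _ ≤ 1 + ((n : ℤ) - m) := by linarith [hinc n]
        _ = ((n + 1 : ℕ) : ℤ) - m := by push_cast; ring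

theorem stmt8 (x : ℕ → ℤ)
    (hinc : ∀ n, |x (n + 1) - x n| ≤ 1)
    (τ : ℕ → ℕ) (hmono : StrictMono τ)
    (hzero : ∀ k, x (τ k) = 0)
    (hratio : Tendsto (fun k : ℕ => (τ (k + 1) : ℝ) / (τ k : ℝ)) atTop (nhds 1)) :
    Tendsto (fun n : ℕ => (x n : ℝ) / n) atTop (nhds 0) := by
  rw [Metric.tendsto_atTop] at hratio ⊢
  intro ε hε
  obtain ⟨K0, hK0⟩ := hratio ε hε
  set K := max K0 1 with hK
  refine ⟨τ K, fun n hn => ?_⟩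
  have hK1 : 1 ≤ K := le_max_right _ _
  have hKτ : K ≤ τ K := hmono.le_apply
  -- largest k with τ k ≤ n
  set k := Nat.findGreatest (fun k => τ k ≤ n) n with hkdef
  have hKn : K ≤ n := le_trans hKτ hn
  have hk1 : τ k ≤ n := by
    rw [hkdef]; exact Nat.findGreatest_spec (P := fun k => τ k ≤ n) (m := K) hKn hn
  have hkK : K ≤ k := by
    rw [hkdef]; exact Nat.le_findGreatest (P := fun k => τ k ≤ n) hKn hn
  have hk2 : n < τ (k + 1) := by
    by_cases h : k + 1 ≤ n
    · by_contra hc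
      push_neg at hc
      have hgt : k < k + 1 := Nat.lt_succ_self k
      rw [hkdef] at hgt
      exact Nat.findGreatest_is_greatest (P := fun k => τ k ≤ n) hgt h hc
    · push_neg at h
      exact lt_of_lt_of_le h (hmono.le_apply)
  have hτk1 : 1 ≤ τ k := le_trans hK1 (le_trans hkK hmono.le_apply)
  have hn1 : 1 ≤ n := le_trans hτk1 hk1
  -- |x n| ≤ n - τ k
  have habs : |x n| ≤ (n : ℤ) - τ k := by
    have := stmt8_aux x hinc n (τ k) hk1
    simpa [hzero k] using this
  -- real estimates
  have hτkpos : (0 : ℝ) < τ k := by exact_mod_cast hτk1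
  have hnpos : (0 : ℝ) < n := by exact_mod_cast hn1
  have hratio_k : dist ((τ (k + 1) : ℝ) / (τ k : ℝ)) 1 < ε :=
    hK0 k (le_trans (le_max_left _ _) hkK)
  rw [Real.dist_eq] at hratio_k
  have hlt : (τ (k + 1) : ℝ) / (τ k : ℝ) - 1 < ε :=
    lt_of_le_of_lt (le_abs_self _) hratio_k
  have hdiff : (τ (k + 1) : ℝ) - τ k < ε * τ k := by
    rw [div_sub_one (ne_of_gt hτkpos), div_lt_iff₀ hτkpos] at hlt
    linarith
  rw [Real.dist_eq, sub_zero, abs_div, abs_of_pos hnpos, div_lt_iff₀ hnpos]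
  have habsR : |(x n : ℝ)| ≤ (n : ℝ) - τ k := by
    have : ((|x n| : ℤ) : ℝ) ≤ ((n : ℤ) - τ k : ℤ) := by exact_mod_cast habs
    push_cast at this
    simpa using this
  have h1 : (n : ℝ) - τ k < ε * τ k := by
    have : (n : ℝ) < τ (k + 1) := by exact_mod_cast hk2
    linarith
  have h2 : ε * (τ k : ℝ) ≤ ε * n := by
    apply mul_le_mul_of_nonneg_left _ (le_of_lt hε)
    exact_mod_cast hk1
  linarith
end

section
/- Let (ξ_n)_{n≥1} be a stationary ergodic sequence of random variables taking values in {-1, 0, 1}, and define X_0 = 0, X_n = ξ_1 + ... + ξ_n, and R_n = card{X_0, ..., X_n}. Then almost surely R_n/n → |E(ξ_1)|. -/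
open Filter MeasureTheory Finset

/-- Discrete intermediate value theorem, upward. -/
lemma walk_ivt_up (x : ℕ → ℤ) (hstep : ∀ k, x (k + 1) ≤ x k + 1) :
    ∀ n c, x 0 ≤ c → c ≤ x n → ∃ k ≤ n, x k = c := by
  intro n
  induction n with
  | zero => intro c h1 h2; exact ⟨0, le_refl _, le_antisymm h1 h2⟩
  | succ n ih =>
    intro c h1 h2
    rcases le_or_gt c (x n) with h | h
    · obtain ⟨k, hk, hk2⟩ := ih c h1 h
      exact ⟨k, hk.trans (Nat.le_succ n), hk2⟩
    · refine ⟨n + 1, le_refl _, ?_⟩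
      have := hstep n
      omega

lemma walk_ivt_down (x : ℕ → ℤ) (hstep : ∀ k, x k - 1 ≤ x (k + 1)) :
    ∀ n c, c ≤ x 0 → x n ≤ c → ∃ k ≤ n, x k = c := by
  intro n c h1 h2
  obtain ⟨k, hk, hk2⟩ := walk_ivt_up (fun k => -x k) (fun k => by have := hstep k; omega)
    n (-c) (by omega) (by omega)
  have hk2' : -x k = -c := hk2
  exact ⟨k, hk, by omega⟩

/-- Lower bound on the range count. -/
lemma card_image_ge (x : ℕ → ℤ) (h0 : x 0 = 0)
    (hstep : ∀ k, x (k + 1) ≤ x k + 1 ∧ x k - 1 ≤ x (k + 1)) (n : ℕ) :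
    (x n).natAbs + 1 ≤ ((range (n + 1)).image x).card := by
  rcases le_or_gt 0 (x n) with h | h
  · have hsub : Finset.Icc (0 : ℤ) (x n) ⊆ (range (n + 1)).image x := by
      intro c hc
      rw [Finset.mem_Icc] at hc
      obtain ⟨k, hk, hk2⟩ := walk_ivt_up x (fun k => (hstep k).1) n c (by omega) hc.2
      exact Finset.mem_image.2 ⟨k, Finset.mem_range.2 (by omega), hk2⟩
    have := Finset.card_le_card hsub
    rw [Int.card_Icc] at this
    omega
  · have hsub : Finset.Icc (x n) (0 : ℤ) ⊆ (range (n + 1)).image x := by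
      intro c hc
      rw [Finset.mem_Icc] at hc
      obtain ⟨k, hk, hk2⟩ := walk_ivt_down x (fun k => (hstep k).2) n c (by omega) hc.1
      exact Finset.mem_image.2 ⟨k, Finset.mem_range.2 (by omega), hk2⟩
    have := Finset.card_le_card hsub
    rw [Int.card_Icc] at this
    omega

/-- Upper bound: the card is at most max - min + 1, with max = x j, min = x i. -/
lemma card_image_le (x : ℕ → ℤ) (n : ℕ) :
    ∃ i ≤ n, ∃ j ≤ n, ((range (n + 1)).image x).card ≤ (x j - x i).toNat + 1 := by
  set s := (range (n + 1)).image x with hs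
  have hne : s.Nonempty := ⟨x 0, Finset.mem_image.2 ⟨0, Finset.mem_range.2 (by omega), rfl⟩⟩
  obtain ⟨a, ha, hamax⟩ := Finset.exists_mem_eq_sup' hne id
  obtain ⟨b, hb, hbmin⟩ := Finset.exists_mem_eq_inf' hne id
  obtain ⟨j, hj, hj2⟩ := Finset.mem_image.1 ha
  obtain ⟨i, hi, hi2⟩ := Finset.mem_image.1 hb
  refine ⟨i, by simpa using Nat.lt_succ_iff.1 (Finset.mem_range.1 hi), j,
    by simpa using Nat.lt_succ_iff.1 (Finset.mem_range.1 hj), ?_⟩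
  have hsub : s ⊆ Finset.Icc (x i) (x j) := by
    intro c hc
    rw [Finset.mem_Icc]
    constructor
    · rw [hi2, show b = s.inf' hne id from hbmin.symm]
      exact Finset.inf'_le id hc
    · rw [hj2, show a = s.sup' hne id from hamax.symm]
      exact Finset.le_sup' id hc
  have := Finset.card_le_card hsub
  rw [Int.card_Icc] at this
  omega

/-- max of an o(n) sequence is o(n). -/
lemma sup_div_tendsto_zero (a : ℕ → ℝ) (ha : ∀ k, 0 ≤ a k)
    (h : Tendsto (fun k => a k / k) atTop (nhds 0)) :
    Tendsto (fun n => ((range (n + 1)).sup' Finset.nonempty_range_add_one a) / n) atTop (nhds 0) := by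
  rw [Metric.tendsto_atTop] at h ⊢
  intro ε hε
  obtain ⟨N, hN⟩ := h (ε / 2) (by positivity)
  obtain ⟨C, hC0, hCbd⟩ : ∃ C : ℝ, 0 ≤ C ∧ ∀ k ≤ N, a k ≤ C :=
    ⟨(range (N + 1)).sup' Finset.nonempty_range_add_one a,
      le_trans (ha 0) (Finset.le_sup' a (Finset.mem_range.2 (Nat.succ_pos N))),
      fun k hk => Finset.le_sup' a (Finset.mem_range.2 (by omega))⟩
  obtain ⟨M, hM⟩ := (Metric.tendsto_atTop.1 (tendsto_const_div_atTop_nhds_zero_nat C)) (ε / 2)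
    (by positivity)
  refine ⟨max (max N M) 1, fun n hn => ?_⟩
  have hn1 : 1 ≤ n := le_trans (le_max_right _ _) hn
  have hnN : N ≤ n := le_trans ((le_max_left _ _).trans (le_max_left _ _)) hn
  have hnM : M ≤ n := le_trans ((le_max_right _ _).trans (le_max_left _ _)) hn
  have hnpos : (0:ℝ) < n := by positivity
  have hsup : (range (n + 1)).sup' Finset.nonempty_range_add_one a ≤ C + (ε / 2) * n := by
    apply Finset.sup'_le
    intro k hk
    rcases le_or_gt k N with h1 | h1
    · have : (0:ℝ) ≤ (ε/2) * n := by positivity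
      have := hCbd k h1
      linarith
    · have hk2 := hN k (by omega)
      rw [Real.dist_eq, sub_zero] at hk2
      have hkpos : (0:ℝ) < k := by
        have : 0 < k := by omega
        exact_mod_cast this
      rw [abs_of_nonneg (div_nonneg (ha k) hkpos.le)] at hk2
      have hak : a k ≤ (ε / 2) * k := by
        have := (div_le_iff₀ hkpos).1 hk2.le
        linarith
      have hkn : (k:ℝ) ≤ n := by
        have : k ≤ n := by have := Finset.mem_range.1 hk; omega
        exact_mod_cast this
      nlinarith [hε.le]
  have hsup0 : 0 ≤ (range (n + 1)).sup' Finset.nonempty_range_add_one a :=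
    le_trans (ha 0) (Finset.le_sup' a (Finset.mem_range.2 (Nat.succ_pos n)))
  rw [Real.dist_eq, sub_zero, abs_of_nonneg (div_nonneg hsup0 hnpos.le)]
  have h1 : ((range (n + 1)).sup' Finset.nonempty_range_add_one a) / n ≤ C / n + ε / 2 := by
    rw [div_le_iff₀ hnpos]
    calc _ ≤ C + (ε / 2) * n := hsup
    _ = (C / n + ε / 2) * n := by field_simp
  have h2 := hM n hnM
  rw [Real.dist_eq, sub_zero, abs_of_nonneg (div_nonneg hC0 hnpos.le)] at h2
  linarith

lemma walk_range_tendsto (x : ℕ → ℤ) (h0 : x 0 = 0)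
    (hstep : ∀ k, x (k + 1) ≤ x k + 1 ∧ x k - 1 ≤ x (k + 1)) (ℓ : ℝ)
    (hlim : Tendsto (fun n => (x n : ℝ) / n) atTop (nhds ℓ)) :
    Tendsto (fun n => (((range (n + 1)).image x).card : ℝ) / n) atTop (nhds |ℓ|) := by
  set a : ℕ → ℝ := fun k => |(x k : ℝ) - ℓ * k| with haDef
  have ha : ∀ k, 0 ≤ a k := fun k => abs_nonneg _
  have hadiv : Tendsto (fun k => a k / k) atTop (nhds 0) := by
    have h1 : Tendsto (fun k => |(x k : ℝ) / k - ℓ|) atTop (nhds 0) := by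
      have h2 := (hlim.sub (tendsto_const_nhds (x := ℓ))).abs
      simpa using h2
    apply h1.congr'
    filter_upwards [eventually_ge_atTop 1] with k hk
    have hk0 : (0:ℝ) < k := by exact_mod_cast Nat.lt_of_lt_of_le Nat.zero_lt_one hk
    have he : (x k : ℝ) / k - ℓ = ((x k : ℝ) - ℓ * k) / k := by field_simp
    rw [he, abs_div, abs_of_pos hk0]
  have hE := sup_div_tendsto_zero a ha hadiv
  -- lower bound sequence
  have hlow : Tendsto (fun n => |(x n : ℝ)| / n) atTop (nhds |ℓ|) := by
    apply hlim.abs.congr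
    intro n
    rw [abs_div, Nat.abs_cast]
  -- upper bound sequence
  have hupp : Tendsto (fun n =>
      2 * ((range (n + 1)).sup' Finset.nonempty_range_add_one a / n) + |ℓ| + 1 / n) atTop
      (nhds |ℓ|) := by
    have := ((hE.const_mul 2).add (tendsto_const_nhds (x := |ℓ|))).add
      (tendsto_one_div_atTop_nhds_zero_nat)
    simpa using this
  refine tendsto_of_tendsto_of_tendsto_of_le_of_le' hlow hupp ?_ ?_
  · filter_upwards [eventually_ge_atTop 1] with n hn
    have hcard := card_image_ge x h0 hstep n
    have h1 : |(x n : ℝ)| ≤ (((range (n + 1)).image x).card : ℝ) := by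
      rw [← Int.cast_abs]
      have : (|x n| : ℤ) ≤ (((range (n + 1)).image x).card : ℤ) := by
        rw [Int.abs_eq_natAbs]; exact_mod_cast Nat.le_of_succ_le hcard
      exact_mod_cast this
    have hn0 : (0:ℝ) ≤ n := Nat.cast_nonneg n
    gcongr
  · filter_upwards [eventually_ge_atTop 1] with n hn
    obtain ⟨i, hi, j, hj, hcard⟩ := card_image_le x n
    have hn0 : (0:ℝ) < n := by exact_mod_cast Nat.lt_of_lt_of_le Nat.zero_lt_one hn
    set E := (range (n + 1)).sup' Finset.nonempty_range_add_one a with hEdef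
    have hai : a i ≤ E := Finset.le_sup' a (Finset.mem_range.2 (by omega))
    have haj : a j ≤ E := Finset.le_sup' a (Finset.mem_range.2 (by omega))
    have hji : |(j : ℝ) - (i : ℝ)| ≤ n := by
      rw [abs_sub_le_iff]
      constructor
      · have : (j:ℝ) ≤ n := by exact_mod_cast hj
        have : (0:ℝ) ≤ i := Nat.cast_nonneg i
        linarith [show (j:ℝ) ≤ n by exact_mod_cast hj]
      · have : (i:ℝ) ≤ n := by exact_mod_cast hi
        have : (0:ℝ) ≤ j := Nat.cast_nonneg j
        linarith [show (i:ℝ) ≤ n by exact_mod_cast hi]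
    have hkey : ((x j : ℝ) - (x i : ℝ)) ≤ 2 * E + |ℓ| * n := by
      have hdecomp : (x j : ℝ) - (x i : ℝ) =
          ((x j : ℝ) - ℓ * j) - ((x i : ℝ) - ℓ * i) + ℓ * ((j : ℝ) - (i : ℝ)) := by ring
      have h1 : (x j : ℝ) - ℓ * j ≤ a j := le_abs_self _
      have h2 : -((x i : ℝ) - ℓ * i) ≤ a i := neg_le_abs _
      have h3 : ℓ * ((j : ℝ) - (i : ℝ)) ≤ |ℓ| * n := by
        calc ℓ * ((j : ℝ) - (i : ℝ)) ≤ |ℓ * ((j : ℝ) - (i : ℝ))| := le_abs_self _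
        _ = |ℓ| * |(j : ℝ) - (i : ℝ)| := abs_mul _ _
        _ ≤ |ℓ| * n := by
            apply mul_le_mul_of_nonneg_left hji (abs_nonneg _)
      linarith
    have hcardR : (((range (n + 1)).image x).card : ℝ) ≤ 2 * E + |ℓ| * n + 1 := by
      have h4 : (((x j - x i).toNat : ℝ)) ≤ (x j : ℝ) - (x i : ℝ) ∨ (x j - x i).toNat = 0 := by
        rcases le_or_gt 0 (x j - x i) with h | h
        · left
          have h6 : ((x j - x i).toNat : ℤ) = x j - x i := Int.toNat_of_nonneg h
          have h7 : ((x j - x i).toNat : ℝ) = ((x j - x i : ℤ) : ℝ) := by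
            exact_mod_cast congrArg (fun z : ℤ => (z : ℝ)) h6
          rw [h7]
          push_cast
          exact le_refl _
        · right; omega
      have h5 : (((range (n + 1)).image x).card : ℝ) ≤ ((x j - x i).toNat : ℝ) + 1 := by
        exact_mod_cast hcard
      have hE0 : 0 ≤ E := le_trans (ha 0) (Finset.le_sup' a (Finset.mem_range.2 (Nat.succ_pos n)))
      rcases h4 with h4 | h4
      · nlinarith [abs_nonneg ℓ, hn0.le]
      · rw [h4] at h5
        have h5' : ((((range (n + 1)).image x).card : ℕ) : ℝ) ≤ 1 := by
          have : (((range (n + 1)).image x).card : ℕ) ≤ 1 := by exact_mod_cast h5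
          exact_mod_cast this
        nlinarith [abs_nonneg ℓ, hn0.le]
    rw [div_le_iff₀ hn0]
    calc (((range (n + 1)).image x).card : ℝ) ≤ 2 * E + |ℓ| * n + 1 := hcardR
    _ = (2 * (E / n) + |ℓ| + 1 / n) * n := by field_simp

section Ergodic
variable {Ω : Type*} [MeasurableSpace Ω] {μ : Measure Ω} [IsProbabilityMeasure μ]
  {T : Ω → Ω} {F : Ω → ℝ}

lemma integrable_of_bounded' (hg : Measurable F) (C : ℝ) (hC : ∀ ω, |F ω| ≤ C) :
    Integrable F μ :=
  (integrable_const C).mono' hg.aestronglyMeasurable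
    (ae_of_all _ fun ω => by simpa [Real.norm_eq_abs] using hC ω)

lemma measurable_birkhoffSum (hT : Measurable T) (hF : Measurable F) (n : ℕ) :
    Measurable (fun ω => birkhoffSum T F n ω) := by
  unfold birkhoffSum
  exact Finset.measurable_sum _ (fun k _ => hF.comp (hT.iterate k))

lemma abs_birkhoffSum_le (C : ℝ) (hb : ∀ ω, |F ω| ≤ C) (n : ℕ) (ω : Ω) :
    |birkhoffSum T F n ω| ≤ n * C := by
  unfold birkhoffSum
  calc |∑ k ∈ Finset.range n, F (T^[k] ω)| ≤ ∑ k ∈ Finset.range n, |F (T^[k] ω)| :=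
        Finset.abs_sum_le_sum_abs _ _
  _ ≤ ∑ _k ∈ Finset.range n, C := Finset.sum_le_sum (fun k _ => hb _)
  _ = n * C := by simp [mul_comm]

/-- One-sided Birkhoff bound: a.e., eventually `S_n ≤ q n` for every rational `q > ∫ F`. -/
lemma onesided (hT : Ergodic T μ) (hF : Measurable F) (hb : ∀ ω, |F ω| ≤ 1)
    (q : ℚ) (hq : (∫ ω, F ω ∂μ) < q) :
    ∀ᵐ ω ∂μ, ∀ᶠ n in atTop, birkhoffSum T F n ω ≤ q * n := by
  have hTm : Measurable T := hT.toMeasurePreserving.measurable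
  have hS : ∀ n, Measurable (fun ω => birkhoffSum T F n ω) := measurable_birkhoffSum hTm hF
  -- "frequently S_n > c n"
  set Freq : ℝ → Ω → Prop :=
    fun c ω => ∀ m : ℕ, ∃ n : ℕ, (m ≤ n ∧ 1 ≤ n) ∧ c * n < birkhoffSum T F n ω with hFreq
  -- transfer lemmas
  have trans1 : ∀ a b : ℝ, a < b → ∀ ω, Freq b (T ω) → Freq a ω := by
    intro a b hab ω hfr m
    obtain ⟨N₀, hN₀⟩ := exists_nat_ge ((|a| + 1) / (b - a))
    have hN₀' : ∀ n : ℕ, N₀ ≤ n → |a| + 1 ≤ (b - a) * n := by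
      intro n hn
      have h1 : (|a| + 1) / (b - a) ≤ (n : ℝ) := le_trans hN₀ (by exact_mod_cast hn)
      have h2 : (0:ℝ) < b - a := by linarith
      calc |a| + 1 = ((|a| + 1) / (b - a)) * (b - a) := by field_simp
      _ ≤ (n : ℝ) * (b - a) := by nlinarith
      _ = (b - a) * n := by ring
    obtain ⟨n, ⟨hn1, hn2⟩, hn3⟩ := hfr (max m N₀)
    refine ⟨n + 1, ⟨by omega, by omega⟩, ?_⟩
    have hsucc : birkhoffSum T F (n + 1) ω = F ω + birkhoffSum T F n (T ω) :=
      birkhoffSum_succ' T F n ω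
    have hbig : |a| + 1 ≤ (b - a) * n := hN₀' n (le_trans (le_max_right _ _) hn1)
    have hFw : -1 ≤ F ω := (abs_le.1 (hb ω)).1
    have hcast : ((n + 1 : ℕ) : ℝ) = (n : ℝ) + 1 := by push_cast; ring
    rw [hsucc, hcast]
    have ha : a ≤ |a| := le_abs_self a
    nlinarith
  have trans2 : ∀ a b : ℝ, a < b → ∀ ω, Freq b ω → Freq a (T ω) := by
    intro a b hab ω hfr m
    obtain ⟨N₀, hN₀⟩ := exists_nat_ge ((|b| + 1) / (b - a))
    have hN₀' : ∀ n : ℕ, N₀ ≤ n → |b| + 1 ≤ (b - a) * n := by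
      intro n hn
      have h1 : (|b| + 1) / (b - a) ≤ (n : ℝ) := le_trans hN₀ (by exact_mod_cast hn)
      have h2 : (0:ℝ) < b - a := by linarith
      calc |b| + 1 = ((|b| + 1) / (b - a)) * (b - a) := by field_simp
      _ ≤ (n : ℝ) * (b - a) := by nlinarith
      _ = (b - a) * n := by ring
    obtain ⟨n, ⟨hn1, hn2⟩, hn3⟩ := hfr (max (m + 2) (N₀ + 1))
    obtain ⟨n', rfl⟩ : ∃ n', n = n' + 1 := ⟨n - 1, by omega⟩
    refine ⟨n', ⟨by omega, by omega⟩, ?_⟩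
    have hsucc : birkhoffSum T F (n' + 1) ω = F ω + birkhoffSum T F n' (T ω) :=
      birkhoffSum_succ' T F n' ω
    rw [hsucc] at hn3
    have hbig : |b| + 1 ≤ (b - a) * n' := hN₀' n' (by omega)
    have hFw : F ω ≤ 1 := (abs_le.1 (hb ω)).2
    have hcast : ((n' + 1 : ℕ) : ℝ) = (n' : ℝ) + 1 := by push_cast; ring
    rw [hcast] at hn3
    have hbb : b ≤ |b| := le_abs_self b
    have hbb2 : -|b| ≤ b := neg_abs_le b
    nlinarith
  -- the invariant set
  set D : Set Ω := ⋂ (r : ℚ), ⋂ (_ : (r : ℝ) < q), ⋂ (m : ℕ), ⋃ (n : ℕ),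
      ⋃ (_ : m ≤ n ∧ 1 ≤ n), {ω | (r : ℝ) * n < birkhoffSum T F n ω} with hD
  have hDmem : ∀ ω, ω ∈ D ↔ ∀ r : ℚ, (r : ℝ) < q → Freq r ω := by
    intro ω
    simp only [hD, Set.mem_iInter, Set.mem_iUnion, Set.mem_setOf_eq, exists_prop, hFreq]
  have hDmeas : MeasurableSet D := by
    refine MeasurableSet.iInter fun r => MeasurableSet.iInter fun _ =>
      MeasurableSet.iInter fun m => MeasurableSet.iUnion fun n =>
      MeasurableSet.iUnion fun _ => ?_
    exact measurableSet_lt measurable_const (hS n)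
  have hDinv : T ⁻¹' D = D := by
    ext ω
    rw [Set.mem_preimage, hDmem, hDmem]
    constructor
    · intro h r hr
      obtain ⟨r', hr1', hr2'⟩ := exists_rat_btwn hr
      exact trans1 r r' (by exact_mod_cast hr1') ω (h r' hr2')
    · intro h r hr
      obtain ⟨r', hr1', hr2'⟩ := exists_rat_btwn hr
      exact trans2 r r' (by exact_mod_cast hr1') ω (h r' hr2')
  rcases hT.ae_empty_or_univ hDmeas hDinv with hcase | hcase
  · -- μ D = 0 : done
    have hD0 : μ D = 0 := by
      have := measure_congr hcase
      simpa using this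
    have hae : ∀ᵐ ω ∂μ, ω ∉ D := by
      rw [ae_iff]
      simpa using hD0
    filter_upwards [hae] with ω hω
    rw [hDmem] at hω
    push_neg at hω
    obtain ⟨r, hr, hnfr⟩ := hω
    simp only [hFreq] at hnfr
    push_neg at hnfr
    obtain ⟨m, hm⟩ := hnfr
    filter_upwards [eventually_ge_atTop (max m 1)] with n hn
    have h1 := hm n ⟨le_trans (le_max_left _ _) hn, le_trans (le_max_right _ _) hn⟩
    have h2 : (r : ℝ) * n ≤ (q : ℝ) * n := by
      apply mul_le_mul_of_nonneg_right hr.le (Nat.cast_nonneg n)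
    linarith
  · -- μ D = 1 : contradiction via the maximal ergodic argument
    exfalso
    have hD1 : μ D = 1 := by
      have := measure_congr hcase
      simpa using this
    obtain ⟨r, hr1, hr2⟩ := exists_rat_btwn hq
    set g : Ω → ℝ := fun ω => F ω - r with hg
    have hgmeas : Measurable g := hF.sub measurable_const
    have hgbd : ∀ ω, |g ω| ≤ 1 + |(r : ℝ)| := by
      intro ω
      calc |g ω| ≤ |F ω| + |(r : ℝ)| := abs_sub _ _
      _ ≤ 1 + |(r : ℝ)| := by linarith [hb ω]
    have hgint : Integrable g μ := integrable_of_bounded' hgmeas _ hgbd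
    have hFint : Integrable F μ := integrable_of_bounded' hF 1 hb
    have hSg : ∀ n, Measurable (fun ω => birkhoffSum T g n ω) :=
      measurable_birkhoffSum hTm hgmeas
    have hSgrel : ∀ n ω, birkhoffSum T g n ω = birkhoffSum T F n ω - n * r := by
      intro n ω
      unfold birkhoffSum
      rw [hg]
      simp only
      rw [Finset.sum_sub_distrib, Finset.sum_const, Finset.card_range, nsmul_eq_mul]
    set Φ : ℕ → Ω → ℝ := fun N ω =>
      (range (N + 1)).sup' Finset.nonempty_range_add_one (fun n => birkhoffSum T g n ω) with hΦ
    have hΦmeas : ∀ N, Measurable (Φ N) := by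
      intro N
      exact Finset.measurable_range_sup'' (fun k _ => hSg k)
    have hΦ0 : ∀ N ω, 0 ≤ Φ N ω := by
      intro N ω
      have h0 : birkhoffSum T g 0 ω = 0 := birkhoffSum_zero T g ω
      calc (0:ℝ) = birkhoffSum T g 0 ω := h0.symm
      _ ≤ Φ N ω := Finset.le_sup' (fun k => birkhoffSum T g k ω)
            (Finset.mem_range.2 (Nat.succ_pos N))
    have hΦbd : ∀ N ω, |Φ N ω| ≤ N * (1 + |(r : ℝ)|) := by
      intro N ω
      rw [abs_of_nonneg (hΦ0 N ω)]
      apply Finset.sup'_le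
      intro n hn
      calc birkhoffSum T g n ω ≤ |birkhoffSum T g n ω| := le_abs_self _
      _ ≤ n * (1 + |(r : ℝ)|) := abs_birkhoffSum_le _ hgbd n ω
      _ ≤ N * (1 + |(r : ℝ)|) := by
          apply mul_le_mul_of_nonneg_right _ (by positivity)
          exact_mod_cast Nat.lt_succ_iff.1 (Finset.mem_range.1 hn)
    set E : ℕ → Set Ω := fun N => {ω | 0 < Φ N ω} with hE
    have hEmeas : ∀ N, MeasurableSet (E N) := fun N =>
      measurableSet_lt measurable_const (hΦmeas N)
    have hkey : ∀ N ω, Φ N ω - Φ N (T ω) ≤ (E N).indicator g ω := by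
      intro N ω
      by_cases h : ω ∈ E N
      · rw [Set.indicator_of_mem h]
        obtain ⟨n, hn, hmax⟩ :=
          Finset.exists_mem_eq_sup' (Finset.nonempty_range_add_one (n := N))
            (fun n => birkhoffSum T g n ω)
        have hΦval : Φ N ω = birkhoffSum T g n ω := hmax
        have hpos : 0 < Φ N ω := h
        have hnpos : n ≠ 0 := by
          intro h0
          rw [hΦval, h0, birkhoffSum_zero] at hpos
          exact lt_irrefl _ hpos
        obtain ⟨m, rfl⟩ : ∃ m, n = m + 1 := ⟨n - 1, by omega⟩
        have hsucc : birkhoffSum T g (m + 1) ω = g ω + birkhoffSum T g m (T ω) :=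
          birkhoffSum_succ' T g m ω
        have hmem : m ∈ range (N + 1) := by
          rw [Finset.mem_range] at hn ⊢
          omega
        have hle : birkhoffSum T g m (T ω) ≤ Φ N (T ω) :=
          Finset.le_sup' (fun n => birkhoffSum T g n (T ω)) hmem
        rw [hΦval, hsucc]
        linarith
      · rw [Set.indicator_of_notMem h]
        have h1 : ¬ (0 < Φ N ω) := h
        have h2 := hΦ0 N ω
        have h3 := hΦ0 N (T ω)
        linarith [not_lt.1 h1]
    have hΦint : ∀ N, Integrable (Φ N) μ := fun N =>
      integrable_of_bounded' (hΦmeas N) _ (hΦbd N)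
    have hΦTint : ∀ N, Integrable (fun ω => Φ N (T ω)) μ := fun N =>
      integrable_of_bounded' ((hΦmeas N).comp hTm) (N * (1 + |(r : ℝ)|))
        (fun ω => hΦbd N (T ω))
    have hcomp : ∀ N, ∫ ω, Φ N (T ω) ∂μ = ∫ ω, Φ N ω ∂μ := by
      intro N
      have hmap : Measure.map T μ = μ := hT.toMeasurePreserving.map_eq
      have h := integral_map (φ := T) (f := Φ N) hTm.aemeasurable
        (by rw [hmap]; exact (hΦmeas N).aestronglyMeasurable)
      rw [hmap] at h
      exact h.symm
    have hψint : ∀ N, Integrable ((E N).indicator g) μ := by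
      intro N
      apply integrable_of_bounded' (hgmeas.indicator (hEmeas N)) (1 + |(r : ℝ)|)
      intro ω
      by_cases h : ω ∈ E N
      · rw [Set.indicator_of_mem h]; exact hgbd ω
      · rw [Set.indicator_of_notMem h]; simp; positivity
    have hstep : ∀ N, 0 ≤ ∫ ω, (E N).indicator g ω ∂μ := by
      intro N
      have h1 : ∫ ω, (Φ N ω - Φ N (T ω)) ∂μ = 0 := by
        rw [integral_sub (hΦint N) (hΦTint N), hcomp N, sub_self]
      have h2 : ∫ ω, (Φ N ω - Φ N (T ω)) ∂μ ≤ ∫ ω, (E N).indicator g ω ∂μ :=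
        integral_mono ((hΦint N).sub (hΦTint N)) (hψint N) (hkey N)
      linarith
    have hmono : Monotone E := by
      apply monotone_nat_of_le_succ
      intro N ω hω
      rw [hE, Set.mem_setOf_eq] at hω ⊢
      refine lt_of_lt_of_le hω ?_
      apply Finset.sup'_le
      intro n hn
      exact Finset.le_sup' (fun k => birkhoffSum T g k ω)
        (Finset.mem_range.2 (by have := Finset.mem_range.1 hn; omega))
    have hDsub : D ⊆ ⋃ N, E N := by
      intro ω hω
      rw [hDmem] at hω
      obtain ⟨n, ⟨hn1, hn2⟩, hn3⟩ := hω r hr2 1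
      refine Set.mem_iUnion.2 ⟨n, ?_⟩
      rw [hE, Set.mem_setOf_eq]
      have h1 : birkhoffSum T g n ω = birkhoffSum T F n ω - n * r := hSgrel n ω
      have h2 : 0 < birkhoffSum T g n ω := by rw [h1]; nlinarith
      calc (0:ℝ) < birkhoffSum T g n ω := h2
      _ ≤ Φ n ω := Finset.le_sup' (fun k => birkhoffSum T g k ω)
            (Finset.mem_range.2 (Nat.lt_succ_self n))
    have hUmeas : MeasurableSet (⋃ N, E N) := MeasurableSet.iUnion hEmeas
    have hUfull : μ (⋃ N, E N) = 1 := by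
      have h1 : μ D ≤ μ (⋃ N, E N) := measure_mono hDsub
      have h2 : μ (⋃ N, E N) ≤ 1 := prob_le_one
      rw [hD1] at h1
      exact le_antisymm h2 h1
    have hcompl0 : μ (⋃ N, E N)ᶜ = 0 := by
      rw [measure_compl hUmeas (measure_ne_top μ _), hUfull]
      simp
    have htend : Tendsto (fun N => ∫ ω, (E N).indicator g ω ∂μ) atTop
        (nhds (∫ ω, (⋃ N, E N).indicator g ω ∂μ)) := by
      apply tendsto_integral_of_dominated_convergence (fun _ => 1 + |(r : ℝ)|)
      · intro N; exact (hgmeas.indicator (hEmeas N)).aestronglyMeasurable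
      · exact integrable_const _
      · intro N
        apply ae_of_all
        intro ω
        rw [Real.norm_eq_abs]
        by_cases h : ω ∈ E N
        · rw [Set.indicator_of_mem h]; exact hgbd ω
        · rw [Set.indicator_of_notMem h]; simp; positivity
      · apply ae_of_all
        intro ω
        by_cases h : ω ∈ ⋃ N, E N
        · obtain ⟨N₀, hN₀⟩ := Set.mem_iUnion.1 h
          rw [Set.indicator_of_mem h]
          apply tendsto_atTop_of_eventually_const (i₀ := N₀)
          intro N hN
          rw [Set.indicator_of_mem (hmono hN hN₀)]
        · rw [Set.indicator_of_notMem h]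
          have : ∀ N, (E N).indicator g ω = 0 := by
            intro N
            apply Set.indicator_of_notMem
            intro hmem
            exact h (Set.mem_iUnion.2 ⟨N, hmem⟩)
          simp only [this]
          exact tendsto_const_nhds
    have hge : 0 ≤ ∫ ω, (⋃ N, E N).indicator g ω ∂μ :=
      ge_of_tendsto htend (Filter.Eventually.of_forall hstep)
    have hind : ∫ ω, (⋃ N, E N).indicator g ω ∂μ = ∫ ω, g ω ∂μ := by
      apply integral_congr_ae
      have hae : ∀ᵐ ω ∂μ, ω ∈ ⋃ N, E N := by
        rw [ae_iff]
        exact hcompl0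
      filter_upwards [hae] with ω hω
      rw [Set.indicator_of_mem hω]
    have hgval : ∫ ω, g ω ∂μ = (∫ ω, F ω ∂μ) - r := by
      rw [hg]
      simp only
      rw [integral_sub hFint (integrable_const _), integral_const]
      simp
    rw [hind, hgval] at hge
    linarith

end Ergodic

lemma birkhoff_bounded {Ω : Type*} [MeasurableSpace Ω] {μ : Measure Ω} [IsProbabilityMeasure μ]
    {T : Ω → Ω} {F : Ω → ℝ} (hT : Ergodic T μ) (hF : Measurable F) (hb : ∀ ω, |F ω| ≤ 1) :
    ∀ᵐ ω ∂μ, Tendsto (fun n => birkhoffSum T F n ω / n) atTop (nhds (∫ ω, F ω ∂μ)) := by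
  have h1 : ∀ᵐ ω ∂μ, ∀ q : ℚ, (∫ ω, F ω ∂μ) < q →
      ∀ᶠ n in atTop, birkhoffSum T F n ω ≤ q * n := by
    rw [ae_all_iff]
    intro q
    by_cases hq : (∫ ω, F ω ∂μ) < q
    · filter_upwards [onesided hT hF hb q hq] with ω h _
      exact h
    · exact ae_of_all _ (fun ω h => absurd h hq)
  have hneg : ∀ ω, |(fun ω => -F ω) ω| ≤ 1 := fun ω => by simpa using hb ω
  have hSneg : ∀ n (ω : Ω), birkhoffSum T (fun ω => -F ω) n ω = -birkhoffSum T F n ω := by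
    intro n ω
    unfold birkhoffSum
    rw [← Finset.sum_neg_distrib]
  have hIneg : (∫ ω, (fun ω => -F ω) ω ∂μ) = -(∫ ω, F ω ∂μ) := by
    simp only
    exact integral_neg F
  have h2 : ∀ᵐ ω ∂μ, ∀ q : ℚ, -(∫ ω, F ω ∂μ) < q →
      ∀ᶠ n in atTop, -birkhoffSum T F n ω ≤ q * n := by
    rw [ae_all_iff]
    intro q
    by_cases hq : -(∫ ω, F ω ∂μ) < (q : ℝ)
    · have hq' : (∫ ω, (fun ω => -F ω) ω ∂μ) < q := by rw [hIneg]; exact hq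
      filter_upwards [onesided hT hF.neg hneg q hq'] with ω h _
      refine h.mono (fun n hn => ?_)
      rwa [show birkhoffSum T (-F) n ω = -birkhoffSum T F n ω from hSneg n ω] at hn
    · exact ae_of_all _ (fun ω h => absurd h hq)
  filter_upwards [h1, h2] with ω hω1 hω2
  refine tendsto_order.2 ⟨?_, ?_⟩
  · intro b hb'
    obtain ⟨p, hp1, hp2⟩ := exists_rat_btwn hb'
    have hq' : -(∫ ω, F ω ∂μ) < ((-p : ℚ) : ℝ) := by push_cast; linarith
    filter_upwards [hω2 (-p) hq', eventually_ge_atTop 1] with n hn hn1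
    have hnpos : (0:ℝ) < n := by exact_mod_cast Nat.lt_of_lt_of_le Nat.zero_lt_one hn1
    have hpn : (p : ℝ) * n ≤ birkhoffSum T F n ω := by
      push_cast at hn
      nlinarith
    calc b < p := hp1
    _ ≤ birkhoffSum T F n ω / n := (le_div_iff₀ hnpos).2 (by linarith)
  · intro b hb'
    obtain ⟨p, hp1, hp2⟩ := exists_rat_btwn hb'
    filter_upwards [hω1 p hp1, eventually_ge_atTop 1] with n hn hn1
    have hnpos : (0:ℝ) < n := by exact_mod_cast Nat.lt_of_lt_of_le Nat.zero_lt_one hn1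
    calc birkhoffSum T F n ω / n ≤ p := (div_le_iff₀ hnpos).2 (by linarith)
    _ < b := hp2

/-- A stationary ergodic sequence `ξ` valued in `{-1,0,1}` is represented as
`ξ (n+1) = f ∘ T^[n]` for an ergodic measure-preserving map `T`. -/
theorem stmt10 {Ω : Type*} [MeasurableSpace Ω] (μ : Measure Ω) [IsProbabilityMeasure μ]
    (T : Ω → Ω) (hT : Ergodic T μ)
    (f : Ω → ℤ) (hf : Measurable f)
    (hval : ∀ ω, f ω = -1 ∨ f ω = 0 ∨ f ω = 1)
    (ξ : ℕ → Ω → ℤ) (hξ : ∀ n ω, ξ (n + 1) ω = f (T^[n] ω))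
    (X : ℕ → Ω → ℤ) (hX : ∀ n ω, X n ω = ∑ k ∈ Finset.range n, ξ (k + 1) ω)
    (R : ℕ → Ω → ℕ)
    (hR : ∀ n ω, R n ω = ((Finset.range (n + 1)).image (fun k => X k ω)).card) :
    ∀ᵐ ω ∂μ, Tendsto (fun n : ℕ => (R n ω : ℝ) / n) atTop
      (nhds |∫ ω, (f ω : ℝ) ∂μ|) := by
  set F : Ω → ℝ := fun ω => (f ω : ℝ) with hFdef
  have hFmeas : Measurable F := Measurable.comp (measurable_from_top) hf
  have hFb : ∀ ω, |F ω| ≤ 1 := by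
    intro ω
    rcases hval ω with h | h | h <;> simp [hFdef, h]
  filter_upwards [birkhoff_bounded hT hFmeas hFb] with ω hω
  have hXS : ∀ n, ((X n ω : ℤ) : ℝ) = birkhoffSum T F n ω := by
    intro n
    rw [hX]
    unfold birkhoffSum
    push_cast
    refine Finset.sum_congr rfl (fun k _ => ?_)
    rw [hξ k ω]
  have hlim : Tendsto (fun n => ((X n ω : ℤ) : ℝ) / n) atTop (nhds (∫ ω, F ω ∂μ)) := by
    refine hω.congr (fun n => ?_)
    rw [hXS n]
  have h0 : X 0 ω = 0 := by rw [hX]; simp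
  have hstep : ∀ k, X (k + 1) ω ≤ X k ω + 1 ∧ X k ω - 1 ≤ X (k + 1) ω := by
    intro k
    have h1 : X (k + 1) ω = X k ω + ξ (k + 1) ω := by
      rw [hX, hX, Finset.sum_range_succ]
    have h2 := hval (T^[k] ω)
    rw [← hξ k ω] at h2
    rcases h2 with h | h | h <;> omega
  have hmain := walk_range_tendsto (fun n => X n ω) h0 hstep (∫ ω, F ω ∂μ) hlim
  refine Tendsto.congr (fun n => ?_) hmain
  rw [hR n ω]
end

section
/- Suppose (x_n) is an integer sequence with x_0 = 0, |x_{n+1} - x_n| ≤ 1 for all n, and there exists N such that n(ℓ - ε) ≤ x_n ≤ n(ℓ + ε) for all n > N, where 0 < ε < ℓ. Then for all sufficiently large n, ⌊n(ℓ - ε)⌋ ≤ r_n ≤ r_{N-1} + n(ℓ + ε), where r_n = card{x_0, ..., x_n}. -/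
open Filter

lemma hits_aux (x : ℕ → ℤ) (hinc : ∀ n, |x (n + 1) - x n| ≤ 1) :
    ∀ n v, x 0 ≤ v → v ≤ x n → ∃ k ≤ n, x k = v := by
  intro n
  induction n with
  | zero => intro v h1 h2; exact ⟨0, le_refl 0, le_antisymm h1 h2⟩
  | succ n ih =>
    intro v h1 h2
    by_cases h : v ≤ x n
    · obtain ⟨k, hk, he⟩ := ih v h1 h
      exact ⟨k, hk.trans (Nat.le_succ n), he⟩
    · push_neg at h
      have hstep := (abs_le.mp (hinc n)).2
      exact ⟨n + 1, le_refl _, (le_antisymm h2 (by omega)).symm⟩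

theorem stmt12 (x : ℕ → ℤ) (h0 : x 0 = 0)
    (hinc : ∀ n, |x (n + 1) - x n| ≤ 1)
    (ℓ ε : ℝ) (hε : 0 < ε) (hεℓ : ε < ℓ) (N : ℕ)
    (hbound : ∀ n : ℕ, N < n → (n : ℝ) * (ℓ - ε) ≤ (x n : ℝ) ∧ (x n : ℝ) ≤ (n : ℝ) * (ℓ + ε)) :
    ∀ᶠ n : ℕ in atTop,
      (⌊(n : ℝ) * (ℓ - ε)⌋ : ℝ) ≤ (((Finset.range (n + 1)).image x).card : ℝ) ∧
      (((Finset.range (n + 1)).image x).card : ℝ) ≤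
        (((Finset.range (N - 1 + 1)).image x).card : ℝ) + (n : ℝ) * (ℓ + ε) := by
  have hℓε : (0:ℝ) < ℓ + ε := by linarith
  have hx : ∀ k, N < k → 1 ≤ x k := by
    intro k hk
    have h := (hbound k hk).1
    have hk1 : (0:ℝ) < (k:ℝ) := by
      exact_mod_cast Nat.pos_of_ne_zero (by omega)
    have hpos : (0:ℝ) < (x k : ℝ) := lt_of_lt_of_le (by nlinarith) h
    have : (0:ℤ) < x k := by exact_mod_cast hpos
    omega
  have hxN : 0 ≤ x N := by
    have h1 := hx (N + 1) (by omega)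
    have h2 := (abs_le.mp (hinc N)).2
    omega
  have hev1 : ∀ᶠ n : ℕ in atTop, (x N : ℝ) ≤ (n:ℝ) * (ℓ + ε) := by
    have ht : Tendsto (fun n : ℕ => (n:ℝ) * (ℓ + ε)) atTop atTop :=
      (tendsto_natCast_atTop_atTop (R := ℝ)).atTop_mul_const hℓε
    exact ht.eventually_ge_atTop _
  filter_upwards [hev1, eventually_gt_atTop N] with n hn1 hn2
  have hnε0 : (0:ℝ) ≤ (n:ℝ) * (ℓ + ε) := by positivity
  constructor
  · -- lower bound
    have hxn := (hbound n hn2).1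
    have hx0 : 0 ≤ x n := by have := hx n hn2; omega
    have hsub : Finset.Icc (0:ℤ) (x n) ⊆ (Finset.range (n + 1)).image x := by
      intro v hv
      rw [Finset.mem_Icc] at hv
      obtain ⟨k, hk, he⟩ := hits_aux x hinc n v (by rw [h0]; exact hv.1) hv.2
      exact Finset.mem_image.mpr ⟨k, Finset.mem_range.mpr (by omega), he⟩
    have hcard := Finset.card_le_card hsub
    rw [Int.card_Icc] at hcard
    have hcast : (((x n + 1 - 0).toNat : ℤ) : ℝ) = (x n : ℝ) + 1 := by
      rw [Int.toNat_of_nonneg (by omega)]; push_cast; ring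
    calc (⌊(n : ℝ) * (ℓ - ε)⌋ : ℝ) ≤ (n:ℝ) * (ℓ - ε) := Int.floor_le _
      _ ≤ (x n : ℝ) := hxn
      _ ≤ (x n : ℝ) + 1 := by linarith
      _ = (((x n + 1 - 0).toNat : ℤ) : ℝ) := hcast.symm
      _ ≤ (((Finset.range (n + 1)).image x).card : ℝ) := by exact_mod_cast hcard
  · -- upper bound
    set M : ℤ := ⌊(n:ℝ) * (ℓ + ε)⌋ with hM
    have hM0 : 0 ≤ M := Int.le_floor.mpr (by push_cast; exact hnε0)
    have hsub : (Finset.range (n + 1)).image x ⊆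
        (Finset.range (N - 1 + 1)).image x ∪ Finset.Icc (1:ℤ) M := by
      intro v hv
      obtain ⟨k, hk, he⟩ := Finset.mem_image.mp hv
      rw [Finset.mem_range] at hk
      by_cases hkN : k < N - 1 + 1
      · exact Finset.mem_union_left _
          (Finset.mem_image.mpr ⟨k, Finset.mem_range.mpr hkN, he⟩)
      · push_neg at hkN
        rcases lt_or_eq_of_le (show N ≤ k by omega) with hgt | heq
        · -- k > N
          have h1 := hx k hgt
          have h2 := (hbound k hgt).2
          have h3 : (x k : ℝ) ≤ (n:ℝ) * (ℓ + ε) := by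
            refine h2.trans ?_
            have : ((k:ℝ)) ≤ (n:ℝ) := by exact_mod_cast Nat.le_of_lt_succ hk
            nlinarith
          refine Finset.mem_union_right _ (Finset.mem_Icc.mpr ⟨?_, ?_⟩) <;> rw [← he]
          · exact h1
          · exact Int.le_floor.mpr h3
        · -- k = N
          subst heq
          rcases eq_or_lt_of_le hxN with h0' | h1'
          · refine Finset.mem_union_left _ (Finset.mem_image.mpr ⟨0, ?_, ?_⟩)
            · exact Finset.mem_range.mpr (by omega)
            · rw [h0, ← he, ← h0']
          · refine Finset.mem_union_right _ (Finset.mem_Icc.mpr ⟨?_, ?_⟩) <;> rw [← he]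
            · omega
            · exact Int.le_floor.mpr hn1
    have hcard := (Finset.card_le_card hsub).trans (Finset.card_union_le _ _)
    have hIcc : ((Finset.Icc (1:ℤ) M).card : ℝ) ≤ (n:ℝ) * (ℓ + ε) := by
      rw [Int.card_Icc]
      have : (((M + 1 - 1).toNat : ℤ) : ℝ) = (M : ℝ) := by
        rw [Int.toNat_of_nonneg (by omega)]; push_cast; ring
      calc (((M + 1 - 1).toNat : ℕ) : ℝ) = (M : ℝ) := by exact_mod_cast this
        _ ≤ (n:ℝ) * (ℓ + ε) := Int.floor_le _
    have : (((Finset.range (n + 1)).image x).card : ℝ) ≤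
        (((Finset.range (N - 1 + 1)).image x).card : ℝ) + ((Finset.Icc (1:ℤ) M).card : ℝ) := by
      exact_mod_cast hcard
    linarith
end

section
/- Let (x_n) be an integer sequence with x_0 = 0, |x_{n+1} - x_n| ≤ 1, and x_n/n → 0. Then r_n/n → 0, where r_n = card{x_0, ..., x_n}. -/
open Filter

private def AA (x : ℕ → ℤ) (n : ℕ) : ℕ :=
  (Finset.range (n + 1)).sup (fun k => (x k).natAbs)

private lemma le_AA (x : ℕ → ℤ) {k n : ℕ} (h : k ≤ n) : (x k).natAbs ≤ AA x n := by
  unfold AA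
  exact Finset.le_sup (f := fun k => (x k).natAbs) (Finset.mem_range.mpr (Nat.lt_succ_of_le h))

private lemma card_bound (x : ℕ → ℤ) (n : ℕ) :
    ((Finset.range (n + 1)).image x).card ≤ 2 * AA x n + 1 := by
  have hsub : (Finset.range (n + 1)).image x ⊆ Finset.Icc (-(AA x n : ℤ)) (AA x n) := by
    intro a ha
    simp only [Finset.mem_image, Finset.mem_range] at ha
    obtain ⟨k, hk, rfl⟩ := ha
    have := le_AA x (Nat.lt_succ_iff.mp hk)
    rw [Finset.mem_Icc]
    omega
  calc ((Finset.range (n + 1)).image x).card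
      ≤ (Finset.Icc (-(AA x n : ℤ)) (AA x n)).card := Finset.card_le_card hsub
    _ = 2 * AA x n + 1 := by
        rw [Int.card_Icc]
        omega

private lemma AA_tendsto (x : ℕ → ℤ)
    (hlim : Tendsto (fun n : ℕ => (x n : ℝ) / n) atTop (nhds 0)) :
    Tendsto (fun n : ℕ => (AA x n : ℝ) / n) atTop (nhds 0) := by
  rw [Metric.tendsto_atTop] at hlim ⊢
  intro ε hε
  obtain ⟨N, hN⟩ := hlim (ε / 2) (by positivity)
  set C : ℕ := AA x N with hC
  obtain ⟨N₂, hN₂⟩ := exists_nat_gt ((C : ℝ) / (ε / 2))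
  refine ⟨max (max N N₂) 1, fun n hn => ?_⟩
  have hn1 : 1 ≤ n := le_trans (le_max_right _ _) hn
  have hnN : N ≤ n := le_trans (le_trans (le_max_left _ _) (le_max_left _ _)) hn
  have hnN₂ : N₂ ≤ n := le_trans (le_trans (le_max_right _ _) (le_max_left _ _)) hn
  have hnpos : (0 : ℝ) < n := by exact_mod_cast hn1
  have hkey : ∀ k ≤ n, ((x k).natAbs : ℝ) < ε * n := by
    intro k hk
    rcases le_or_gt k N with hkN | hkN
    · have h1 : ((x k).natAbs : ℝ) ≤ C := by exact_mod_cast le_AA x hkN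
      have h2 : (C : ℝ) < (N₂ : ℝ) * (ε / 2) := by
        rwa [div_lt_iff₀ (by positivity)] at hN₂
      have h3 : (N₂ : ℝ) ≤ n := by exact_mod_cast hnN₂
      nlinarith
    · have hk1 : (1 : ℝ) ≤ k := by exact_mod_cast Nat.one_le_iff_ne_zero.mpr (by omega)
      have hkpos : (0 : ℝ) < k := by linarith
      have := hN k (by omega)
      rw [Real.dist_eq, sub_zero, abs_div, abs_of_nonneg (by positivity : (0:ℝ) ≤ (k:ℝ)),
        div_lt_iff₀ hkpos] at this
      have hxk : |(x k : ℝ)| = ((x k).natAbs : ℝ) := by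
        rw [Nat.cast_natAbs, Int.cast_abs]
      have hkn : (k : ℝ) ≤ n := by exact_mod_cast hk
      nlinarith [abs_nonneg (x k : ℝ)]
  -- the sup is attained
  obtain ⟨k₀, hk₀mem, hk₀⟩ := Finset.exists_mem_eq_sup (Finset.range (n + 1))
    ⟨0, by simp⟩ (fun k => (x k).natAbs)
  have hk₀n : k₀ ≤ n := Nat.lt_succ_iff.mp (Finset.mem_range.mp hk₀mem)
  have hAn : ((AA x n : ℕ) : ℝ) < ε * n := by
    rw [AA, hk₀]
    exact hkey k₀ hk₀n
  rw [Real.dist_eq, sub_zero, abs_of_nonneg (by positivity)]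
  rw [div_lt_iff₀ hnpos]
  linarith

theorem stmt14 (x : ℕ → ℤ) (h0 : x 0 = 0)
    (hinc : ∀ n, |x (n + 1) - x n| ≤ 1)
    (hlim : Tendsto (fun n : ℕ => (x n : ℝ) / n) atTop (nhds 0)) :
    Tendsto (fun n : ℕ => (((Finset.range (n + 1)).image x).card : ℝ) / n)
      atTop (nhds 0) := by
  have hA := AA_tendsto x hlim
  have hg : Tendsto (fun n : ℕ => (2 * (AA x n) + 1 : ℝ) / n) atTop (nhds 0) := by
    have h1 : Tendsto (fun n : ℕ => 2 * ((AA x n : ℝ) / n) + 1 / n) atTop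
        (nhds (2 * 0 + 0)) :=
      (hA.const_mul 2).add tendsto_one_div_atTop_nhds_zero_nat
    simp only [mul_zero, add_zero] at h1
    refine h1.congr fun n => ?_
    rw [add_div, mul_div_assoc]
  refine squeeze_zero (fun n => by positivity) (fun n => ?_) hg
  have hcard : (((Finset.range (n + 1)).image x).card : ℝ) ≤ 2 * (AA x n) + 1 := by
    exact_mod_cast card_bound x n
  rw [div_eq_mul_inv, div_eq_mul_inv]
  exact mul_le_mul_of_nonneg_right hcard (by positivity)
end

section
/- There exists a sequence (x_n) in ℤ² with x_0 = 0 and ‖x_{n+1} - x_n‖ ≤ 1 (sup norm or Euclidean with unit steps) such that all x_n are distinct (so r_n = n+1) while x_n/n → 0. In particular, the implication 'x_n/n → 0 implies r_n/n → 0' fails in dimension 2. -/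
open Filter

/-- snake path through the quadrant ℕ × ℕ by shells of constant max-coordinate -/
def snake (n : ℕ) : ℕ × ℕ :=
  if n.sqrt % 2 = 0 then
    (if n - n.sqrt * n.sqrt ≤ n.sqrt then (n - n.sqrt * n.sqrt, n.sqrt)
     else (n.sqrt, 2 * n.sqrt - (n - n.sqrt * n.sqrt)))
  else
    (if n - n.sqrt * n.sqrt ≤ n.sqrt then (n.sqrt, n - n.sqrt * n.sqrt)
     else (2 * n.sqrt - (n - n.sqrt * n.sqrt), n.sqrt))

/-- inverse of the snake path -/
def unsnake (p : ℕ × ℕ) : ℕ :=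
  (max p.1 p.2) * (max p.1 p.2) +
    (if (max p.1 p.2) % 2 = 0 then
      (if p.2 = max p.1 p.2 then p.1 else 2 * (max p.1 p.2) - p.2)
     else
      (if p.1 = max p.1 p.2 then p.2 else 2 * (max p.1 p.2) - p.1))

lemma sqrt_facts (n : ℕ) : n.sqrt * n.sqrt ≤ n ∧ n < n.sqrt * n.sqrt + 2 * n.sqrt + 1 := by
  have h1 := Nat.sqrt_le' n
  have h2 := Nat.lt_succ_sqrt' n
  constructor <;> nlinarith

lemma unsnake_snake (n : ℕ) : unsnake (snake n) = n := by
  obtain ⟨h1, h2⟩ := sqrt_facts n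
  unfold snake
  split_ifs with hp hj hj
  · have hm : (n - n.sqrt * n.sqrt) ⊔ n.sqrt = n.sqrt := by omega
    simp [unsnake, hm, hp]; omega
  · have hm : n.sqrt ⊔ (2 * n.sqrt - (n - n.sqrt * n.sqrt)) = n.sqrt := by omega
    simp only [unsnake, hm]
    split_ifs <;> omega
  · have hm : n.sqrt ⊔ (n - n.sqrt * n.sqrt) = n.sqrt := by omega
    simp only [unsnake, hm]
    split_ifs <;> omega
  · have hm : (2 * n.sqrt - (n - n.sqrt * n.sqrt)) ⊔ n.sqrt = n.sqrt := by omega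
    simp only [unsnake, hm]
    split_ifs <;> omega

lemma snake_inj : Function.Injective snake :=
  Function.LeftInverse.injective unsnake_snake

lemma snake_bound (n : ℕ) : (snake n).1 ≤ n.sqrt ∧ (snake n).2 ≤ n.sqrt := by
  obtain ⟨h1, h2⟩ := sqrt_facts n
  unfold snake
  split_ifs with hp hj hj <;> simp <;> omega

lemma sqrt_succ (n : ℕ) : (n + 1).sqrt = n.sqrt ∨
    ((n + 1).sqrt = n.sqrt + 1 ∧ n + 1 = n.sqrt * n.sqrt + 2 * n.sqrt + 1) := by
  obtain ⟨h1, h2⟩ := sqrt_facts n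
  by_cases h : n + 1 = n.sqrt * n.sqrt + 2 * n.sqrt + 1
  · right
    refine ⟨le_antisymm ?_ (Nat.le_sqrt'.2 (by nlinarith)), h⟩
    have := Nat.sqrt_le' (n + 1)
    by_contra hc
    have hc2 : n.sqrt + 2 ≤ (n + 1).sqrt := by omega
    nlinarith [Nat.sqrt_le' (n + 1), pow_le_pow_left₀ (by omega : 0 ≤ n.sqrt + 2)
      (le_refl (n.sqrt + 2)) 2]
  · left
    refine le_antisymm ?_ (Nat.le_sqrt'.2 (by nlinarith))
    by_contra hc
    have hc2 : n.sqrt + 1 ≤ (n + 1).sqrt := by omega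
    have h3 := Nat.sqrt_le' (n + 1)
    have h4 : (n.sqrt + 1) ^ 2 ≤ (n + 1).sqrt ^ 2 := Nat.pow_le_pow_left hc2 2
    have h5 : n.sqrt * n.sqrt + 2 * n.sqrt + 1 ≤ n + 1 := by nlinarith
    omega

lemma snake_step (n : ℕ) :
    (snake (n + 1)).1 ≤ (snake n).1 + 1 ∧ (snake n).1 ≤ (snake (n + 1)).1 + 1 ∧
    (snake (n + 1)).2 ≤ (snake n).2 + 1 ∧ (snake n).2 ≤ (snake (n + 1)).2 + 1 := by
  obtain ⟨h1, h2⟩ := sqrt_facts n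
  obtain ⟨h1', h2'⟩ := sqrt_facts (n + 1)
  rcases sqrt_succ n with h | ⟨h, he⟩ <;>
  · rw [h] at h1' h2'
    unfold snake
    rw [h]
    have e1 : (n.sqrt + 1) * (n.sqrt + 1) = n.sqrt * n.sqrt + 2 * n.sqrt + 1 := by ring
    split_ifs <;> simp <;> omega

lemma tendsto_aux (u : ℕ → ℕ) (hu : ∀ n, u n ≤ n.sqrt) :
    Tendsto (fun n : ℕ => (((u n : ℤ) : ℝ)) / n) atTop (nhds 0) := by
  have hsq : Tendsto (fun n : ℕ => (n.sqrt : ℝ) / n) atTop (nhds 0) := by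
    have hb : Tendsto (fun n : ℕ => (1 : ℝ) / n.sqrt) atTop (nhds 0) := by
      apply Tendsto.comp tendsto_one_div_atTop_nhds_zero_nat
      exact Filter.tendsto_atTop_atTop.2 fun N =>
        ⟨N * N, fun n hn => Nat.le_sqrt'.2 (by nlinarith)⟩
    apply squeeze_zero' (g := fun n : ℕ => (1 : ℝ) / n.sqrt) _ _ hb
    · filter_upwards [eventually_ge_atTop 1] with n hn
      positivity
    · filter_upwards [eventually_ge_atTop 1] with n hn
      have hs : 1 ≤ n.sqrt := Nat.le_sqrt'.2 (by simpa using hn)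
      have h0 : n.sqrt * n.sqrt ≤ n := (sqrt_facts n).1
      have h1 : (n.sqrt : ℝ) * n.sqrt ≤ n := by exact_mod_cast h0
      have hn0 : (0 : ℝ) < n := by exact_mod_cast Nat.lt_of_lt_of_le Nat.zero_lt_one hn
      have hs0 : (0 : ℝ) < n.sqrt := by exact_mod_cast Nat.lt_of_lt_of_le Nat.zero_lt_one hs
      rw [div_le_div_iff₀ hn0 hs0]
      nlinarith
  apply squeeze_zero' (g := fun n : ℕ => (n.sqrt : ℝ) / n) _ _ hsq
  · filter_upwards [eventually_ge_atTop 1] with n hn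
    positivity
  · filter_upwards [eventually_ge_atTop 1] with n hn
    have hn0 : (0 : ℝ) < n := by exact_mod_cast Nat.lt_of_lt_of_le Nat.zero_lt_one hn
    have h : ((u n : ℤ) : ℝ) ≤ (n.sqrt : ℝ) := by exact_mod_cast hu n
    exact div_le_div_of_nonneg_right h hn0.le |>.trans_eq rfl

theorem stmt16 :
    ∃ x : ℕ → ℤ × ℤ, x 0 = 0 ∧
      (∀ n, |(x (n + 1)).1 - (x n).1| ≤ 1 ∧ |(x (n + 1)).2 - (x n).2| ≤ 1) ∧
      Function.Injective x ∧
      (∀ n, ((Finset.range (n + 1)).image x).card = n + 1) ∧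
      Tendsto (fun n : ℕ => ((x n).1 : ℝ) / n) atTop (nhds 0) ∧
      Tendsto (fun n : ℕ => ((x n).2 : ℝ) / n) atTop (nhds 0) := by
  have hinj : Function.Injective fun n => (((snake n).1 : ℤ), ((snake n).2 : ℤ)) := by
    intro a b hab
    apply snake_inj
    simp only [Prod.mk.injEq, Int.natCast_inj] at hab
    exact Prod.ext hab.1 hab.2
  refine ⟨fun n => (((snake n).1 : ℤ), ((snake n).2 : ℤ)), ?_, ?_, hinj, ?_, ?_, ?_⟩
  · simp [snake]
  · intro n
    have := snake_step n
    constructor <;> simp only [abs_le] <;> constructor <;> push_cast <;> omega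
  · intro n
    rw [Finset.card_image_of_injective _ hinj, Finset.card_range]
  · exact tendsto_aux _ fun n => (snake_bound n).1
  · exact tendsto_aux _ fun n => (snake_bound n).2
end

section
/- Let p ∈ [0,1], and let (Z_k) be i.i.d. with P(Z_k = 1) = p = 1 - P(Z_k = -1), X_n = Z_1 + ... + Z_n, R_n = card{X_0, ..., X_n}. Then almost surely lim_{n→∞} R_n/n = lim_{n→∞} |X_n|/n = |2p - 1|. -/
open Filter MeasureTheory ProbabilityTheory Finset Topology


lemma ivt_up (f : ℕ → ℤ) (hf : ∀ k, f (k+1) = f k + 1 ∨ f (k+1) = f k - 1)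
    (m : ℕ) (c : ℤ) (h1 : f m ≤ c) :
    ∀ n, m ≤ n → c ≤ f n → ∃ k, m ≤ k ∧ k ≤ n ∧ f k = c := by
  intro n
  induction n with
  | zero => intro hm h2; exact ⟨0, hm, le_refl 0, le_antisymm (Nat.le_zero.1 hm ▸ h1) h2⟩
  | succ n ih =>
    intro hm h2
    rcases Nat.lt_or_ge n m with hlt | hge
    · have : m = n + 1 := le_antisymm hm hlt
      exact ⟨m, le_refl m, hm, le_antisymm (this ▸ h1) (this ▸ h2)⟩
    · rcases le_or_gt c (f n) with h | h
      · obtain ⟨k, hk1, hk2, hk3⟩ := ih hge h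
        exact ⟨k, hk1, hk2.trans (Nat.le_succ n), hk3⟩
      · refine ⟨n + 1, hm, le_refl _, le_antisymm ?_ h2⟩
        rcases hf n with h' | h' <;> omega

lemma walk_image_eq_Icc (f : ℕ → ℤ) (hf : ∀ k, f (k+1) = f k + 1 ∨ f (k+1) = f k - 1)
    (n : ℕ) :
    (Finset.range (n+1)).image f =
      Finset.Icc ((Finset.range (n+1)).inf' ⟨0, by simp⟩ f)
        ((Finset.range (n+1)).sup' ⟨0, by simp⟩ f) := by
  have hne : (Finset.range (n+1)).Nonempty := ⟨0, by simp⟩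
  apply le_antisymm
  · intro c hc
    simp only [Finset.mem_image] at hc
    obtain ⟨k, hk, rfl⟩ := hc
    exact Finset.mem_Icc.2 ⟨Finset.inf'_le _ hk, Finset.le_sup' _ hk⟩
  · intro c hc
    rw [Finset.mem_Icc] at hc
    obtain ⟨a, ha, hfa⟩ := Finset.exists_mem_eq_inf' hne f
    obtain ⟨b, hb, hfb⟩ := Finset.exists_mem_eq_sup' hne f
    rw [Finset.mem_range] at ha hb
    rcases le_or_gt a b with hab | hab
    · obtain ⟨k, _, hk2, hk3⟩ := ivt_up f hf a c (hfa ▸ hc.1) b hab (hfb ▸ hc.2)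
      exact Finset.mem_image.2 ⟨k, Finset.mem_range.2 (by omega), hk3⟩
    · have hf' : ∀ k, (-f ·) (k+1) = (-f ·) k + 1 ∨ (-f ·) (k+1) = (-f ·) k - 1 := by
        intro k; have := hf k; dsimp only; omega
      have h1 : f b ≥ c := by rw [← hfb]; exact hc.2
      have h2 : f a ≤ c := by rw [← hfa]; exact hc.1
      obtain ⟨k, _, hk2, hk3⟩ := ivt_up (-f ·) hf' b (-c)
        (by simpa using h1) a hab.le (by simpa using h2)
      refine Finset.mem_image.2 ⟨k, Finset.mem_range.2 (by omega), by omega⟩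

lemma sup_div_tendsto (g : ℕ → ℝ) (hg0 : g 0 = 0) (L : ℝ)
    (h : Tendsto (fun n => g n / n) atTop (𝓝 L)) :
    Tendsto (fun n : ℕ => (Finset.range (n+1)).sup' ⟨0, by simp⟩ g / n) atTop
      (𝓝 (max L 0)) := by
  set M := max L 0 with hM
  have hM0 : 0 ≤ M := le_max_right _ _
  have hLM : L ≤ M := le_max_left _ _
  rw [Metric.tendsto_atTop] at h ⊢
  intro ε hε
  obtain ⟨N₁, hN₁⟩ := h (ε/2) (by positivity)
  set C : ℝ := ∑ k ∈ Finset.range (N₁+1), |g k| with hC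
  have hCk : ∀ k ≤ N₁, g k ≤ C := by
    intro k hk
    calc g k ≤ |g k| := le_abs_self _
    _ ≤ C := Finset.single_le_sum (fun i _ => abs_nonneg (g i))
        (Finset.mem_range.2 (by omega))
  have hMε : 0 < M + ε/2 := by positivity
  refine ⟨max (N₁ + 1) (⌈C / (M + ε/2)⌉₊ + 1), fun n hn => ?_⟩
  have hnN₁ : N₁ + 1 ≤ n := le_trans (le_max_left _ _) hn
  have hnceil : ⌈C / (M + ε/2)⌉₊ + 1 ≤ n := le_trans (le_max_right _ _) hn
  have hn0 : (0:ℝ) < n := by exact_mod_cast Nat.pos_of_ne_zero (by omega)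
  have hnC : C ≤ (M + ε/2) * n := by
    rw [← div_le_iff₀' hMε]
    calc C / (M + ε/2) ≤ (⌈C / (M + ε/2)⌉₊ : ℝ) := Nat.le_ceil _
    _ ≤ (n : ℝ) := Nat.cast_le.2 (by omega)
  have hsup_le : (Finset.range (n+1)).sup' ⟨0, by simp⟩ g ≤ (M + ε/2) * n := by
    apply Finset.sup'_le
    intro k hk
    rw [Finset.mem_range] at hk
    rcases le_or_gt k N₁ with hkN | hkN
    · exact (hCk k hkN).trans hnC
    · have hk0 : (0:ℝ) < k := by exact_mod_cast Nat.pos_of_ne_zero (by omega)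
      have := hN₁ k (by omega)
      rw [Real.dist_eq, abs_lt] at this
      have hgk : g k ≤ (L + ε/2) * k := by
        rw [← div_le_iff₀ hk0] at *
        linarith [this.2]
      rcases le_or_gt (L + ε/2) 0 with hL | hL
      · have : (L + ε/2) * k ≤ 0 := mul_nonpos_of_nonpos_of_nonneg hL hk0.le
        nlinarith
      · calc g k ≤ (L + ε/2) * k := hgk
        _ ≤ (M + ε/2) * k := by nlinarith
        _ ≤ (M + ε/2) * n := by
            have : (k:ℝ) ≤ n := by exact_mod_cast Nat.cast_le.2 (by omega)
            nlinarith
  have hsup_ge0 : (0:ℝ) ≤ (Finset.range (n+1)).sup' ⟨0, by simp⟩ g := by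
    rw [← hg0]; exact Finset.le_sup' g (Finset.mem_range.2 (by omega))
  have hsup_gen : g n ≤ (Finset.range (n+1)).sup' ⟨0, by simp⟩ g :=
    Finset.le_sup' g (Finset.mem_range.2 (by omega))
  have hupper : (Finset.range (n+1)).sup' ⟨0, by simp⟩ g / n ≤ M + ε/2 := by
    rw [div_le_iff₀ hn0]; exact hsup_le
  have hlower : M - ε/2 < (Finset.range (n+1)).sup' ⟨0, by simp⟩ g / n := by
    rcases le_total L 0 with hL | hL
    · have : M = 0 := max_eq_right hL
      rw [this]
      have : (0:ℝ) ≤ (Finset.range (n+1)).sup' ⟨0, by simp⟩ g / n :=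
        div_nonneg hsup_ge0 hn0.le
      linarith
    · have hMe : M = L := max_eq_left hL
      have := hN₁ n (by omega)
      rw [Real.dist_eq, abs_lt] at this
      have : L - ε/2 < g n / n := by linarith [this.1]
      have hd : g n / n ≤ (Finset.range (n+1)).sup' ⟨0, by simp⟩ g / n := by
        gcongr
      linarith
  rw [Real.dist_eq, abs_lt]
  constructor <;> linarith

lemma neg_sup_neg {s : Finset ℕ} (H : s.Nonempty) (g : ℕ → ℝ) :
    - s.sup' H (fun i => -g i) = s.inf' H g := by
  refine le_antisymm (Finset.le_inf' H _ fun i hi => neg_le.2 (Finset.le_sup' (fun i => -g i) hi))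
    (le_neg.2 (Finset.sup'_le H _ fun i hi => neg_le_neg (Finset.inf'_le _ hi)))

lemma inf_div_tendsto (g : ℕ → ℝ) (hg0 : g 0 = 0) (L : ℝ)
    (h : Tendsto (fun n => g n / n) atTop (𝓝 L)) :
    Tendsto (fun n : ℕ => (Finset.range (n+1)).inf' ⟨0, by simp⟩ g / n) atTop
      (𝓝 (min L 0)) := by
  have h' : Tendsto (fun n : ℕ => (fun k => -g k) n / n) atTop (𝓝 (-L)) := by
    have := h.neg
    simpa [neg_div] using this
  have hs := sup_div_tendsto (fun k => -g k) (by simp [hg0]) (-L) h'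
  have := hs.neg
  have heq : ∀ n : ℕ, -((Finset.range (n+1)).sup' ⟨0, by simp⟩ (fun k => -g k) / n)
      = (Finset.range (n+1)).inf' ⟨0, by simp⟩ g / n := by
    intro n
    rw [← neg_div]; exact congrArg (· / (n:ℝ)) (neg_sup_neg _ g)
  have hval : -(max (-L) 0) = min L 0 := by
    rcases le_total L 0 with hL | hL <;> simp [max_eq_left, max_eq_right, min_eq_left,
      min_eq_right, hL, neg_nonneg.2, *]
  rw [hval] at this
  exact this.congr heq

lemma range_card_tendsto (f : ℕ → ℤ) (hf0 : f 0 = 0)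
    (hstep : ∀ k, f (k+1) = f k + 1 ∨ f (k+1) = f k - 1) (L : ℝ)
    (h : Tendsto (fun n => (f n : ℝ)/n) atTop (𝓝 L)) :
    Tendsto (fun n : ℕ => (((Finset.range (n+1)).image f).card : ℝ)/n) atTop (𝓝 |L|) := by
  set g : ℕ → ℝ := fun k => (f k : ℝ) with hg
  have hg0 : g 0 = 0 := by simp [hg, hf0]
  have hsup := sup_div_tendsto g hg0 L h
  have hinf := inf_div_tendsto g hg0 L h
  have hone : Tendsto (fun n : ℕ => (1:ℝ) / n) atTop (𝓝 0) := by
    simpa using tendsto_one_div_atTop_nhds_zero_nat (𝕜 := ℝ)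
  have hlim := (hsup.sub hinf).add hone
  have hvl : max L 0 - min L 0 + 0 = |L| := by rw [add_zero, max_sub_min_eq_abs]; simp [abs_sub_comm]
  rw [hvl] at hlim
  refine hlim.congr fun n => ?_
  have hne : (Finset.range (n+1)).Nonempty := ⟨0, by simp⟩
  set M : ℤ := (Finset.range (n+1)).sup' hne f with hM
  set m : ℤ := (Finset.range (n+1)).inf' hne f with hm
  have hmM : m ≤ M := (Finset.inf'_le f (Finset.mem_range.2 n.succ_pos)).trans
    (Finset.le_sup' f (Finset.mem_range.2 n.succ_pos))
  have hcard : (((Finset.range (n+1)).image f).card : ℝ) = (M : ℝ) + 1 - (m : ℝ) := by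
    rw [walk_image_eq_Icc f hstep n, Int.card_Icc, ← hM, ← hm]
    have h1 : ((M + 1 - m).toNat : ℤ) = M + 1 - m := Int.toNat_of_nonneg (by omega)
    rw [← Int.cast_natCast (R := ℝ), h1]
    push_cast
    ring
  have hsupc : ((M : ℤ) : ℝ) = (Finset.range (n+1)).sup' hne g :=
    Finset.comp_sup'_eq_sup'_comp hne (fun x : ℤ => (x : ℝ)) (fun x y => Int.cast_max)
  have hinfc : ((m : ℤ) : ℝ) = (Finset.range (n+1)).inf' hne g :=
    Finset.apply_inf'_eq_inf'_comp hne (fun x : ℤ => (x : ℝ)) (fun x y => Int.cast_min)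
  rw [hcard, hsupc, hinfc]
  ring

theorem stmt18 {Ω : Type*} [MeasurableSpace Ω] (μ : Measure Ω) [IsProbabilityMeasure μ]
    (p : ℝ) (hp : p ∈ Set.Icc (0 : ℝ) 1)
    (Z : ℕ → Ω → ℤ) (hZmeas : ∀ k, Measurable (Z k))
    (hindep : iIndepFun Z μ)
    (hval : ∀ k ω, Z k ω = 1 ∨ Z k ω = -1)
    (hp1 : ∀ k, (μ {ω | Z k ω = 1}).toReal = p)
    (hpm1 : ∀ k, (μ {ω | Z k ω = -1}).toReal = 1 - p)
    (X : ℕ → Ω → ℤ) (hX : ∀ n ω, X n ω = ∑ k ∈ Finset.range n, Z (k + 1) ω)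
    (R : ℕ → Ω → ℕ)
    (hR : ∀ n ω, R n ω = ((Finset.range (n + 1)).image (fun k => X k ω)).card) :
    ∀ᵐ ω ∂μ,
      Tendsto (fun n : ℕ => (R n ω : ℝ) / n) atTop (nhds |2 * p - 1|) ∧
      Tendsto (fun n : ℕ => ((|X n ω| : ℤ) : ℝ) / n) atTop (nhds |2 * p - 1|) := by
  classical
  set Y : ℕ → Ω → ℝ := fun i ω => (Z (i+1) ω : ℝ) with hY
  have hcastmeas : Measurable (fun x : ℤ => (x : ℝ)) := measurable_from_top
  have hYmeas : ∀ i, Measurable (Y i) := fun i => hcastmeas.comp (hZmeas (i+1))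
  -- measure of level sets
  have hAmeas : ∀ k, MeasurableSet {ω | Z k ω = 1} := fun k =>
    hZmeas k (measurableSet_singleton 1)
  have hmuA : ∀ k, μ {ω | Z k ω = 1} = ENNReal.ofReal p := by
    intro k
    rw [← hp1 k, ENNReal.ofReal_toReal (measure_ne_top μ _)]
  have hmuB : ∀ k, μ {ω | Z k ω = -1} = ENNReal.ofReal (1 - p) := by
    intro k
    rw [← hpm1 k, ENNReal.ofReal_toReal (measure_ne_top μ _)]
  have hcompl : ∀ k, {ω | Z k ω = 1}ᶜ = {ω | Z k ω = -1} := by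
    intro k
    ext ω
    rcases hval k ω with h | h <;> simp [h]
  have key : ∀ k (s : Set ℤ),
      μ (Z k ⁻¹' s) = (if (1:ℤ) ∈ s then ENNReal.ofReal p else 0)
        + (if (-1:ℤ) ∈ s then ENNReal.ofReal (1-p) else 0) := by
    intro k s
    have h1 : Z k ⁻¹' s ∩ {ω | Z k ω = 1} = if (1:ℤ) ∈ s then {ω | Z k ω = 1} else ∅ := by
      split_ifs with h
      · ext ω; simp only [Set.mem_inter_iff, Set.mem_preimage, Set.mem_setOf_eq]
        constructor
        · exact fun hh => hh.2
        · intro hh; exact ⟨by rw [hh]; exact h, hh⟩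
      · ext ω; simp only [Set.mem_inter_iff, Set.mem_preimage, Set.mem_setOf_eq,
          Set.mem_empty_iff_false, iff_false]
        rintro ⟨hs, h1⟩; rw [h1] at hs; exact h hs
    have h2 : Z k ⁻¹' s ∩ {ω | Z k ω = 1}ᶜ
        = if (-1:ℤ) ∈ s then {ω | Z k ω = -1} else ∅ := by
      rw [hcompl k]
      split_ifs with h
      · ext ω; simp only [Set.mem_inter_iff, Set.mem_preimage, Set.mem_setOf_eq]
        constructor
        · exact fun hh => hh.2
        · intro hh; exact ⟨by rw [hh]; exact h, hh⟩
      · ext ω; simp only [Set.mem_inter_iff, Set.mem_preimage, Set.mem_setOf_eq,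
          Set.mem_empty_iff_false, iff_false]
        rintro ⟨hs, h1⟩; rw [h1] at hs; exact h hs
    rw [← measure_inter_add_diff (Z k ⁻¹' s) (hAmeas k), Set.diff_eq, h1, h2]
    congr 1
    · split_ifs <;> simp [hmuA k]
    · split_ifs <;> simp [hmuB k]
  -- identical distribution
  have hident : ∀ i, IdentDistrib (Y i) (Y 0) μ μ := by
    intro i
    refine ⟨(hYmeas i).aemeasurable, (hYmeas 0).aemeasurable, ?_⟩
    have : ∀ j, Measure.map (Y j) μ
        = Measure.map (fun x : ℤ => (x : ℝ)) (Measure.map (Z (j+1)) μ) := by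
      intro j
      rw [Measure.map_map hcastmeas (hZmeas (j+1))]
      rfl
    rw [this i, this 0]
    congr 1
    ext s hs
    rw [Measure.map_apply (hZmeas _) hs, Measure.map_apply (hZmeas _) hs, key, key]
  -- independence
  have hindep' : Pairwise (Function.onFun (IndepFun · · μ) Y) := by
    intro i j hij
    exact (hindep.indepFun (show i + 1 ≠ j + 1 by omega)).comp hcastmeas hcastmeas
  -- integrability
  have hint : Integrable (Y 0) μ := by
    refine Integrable.mono' (integrable_const 1) (hYmeas 0).aestronglyMeasurable
      (Filter.Eventually.of_forall fun ω => ?_)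
    rcases hval 1 ω with h | h <;> simp [hY, h]
  -- expectation
  have hexp : μ[Y 0] = 2 * p - 1 := by
    have hrepr : Y 0 = fun ω =>
        ({ω | Z 1 ω = 1} : Set Ω).indicator (fun _ => (2:ℝ)) ω - 1 := by
      funext ω
      rcases hval 1 ω with h | h <;>
        simp [hY, h, Set.indicator_apply, Set.mem_setOf_eq] <;> norm_num
    rw [hrepr]
    rw [integral_sub ((integrable_const (2:ℝ)).indicator (hAmeas 1)) (integrable_const 1)]
    rw [integral_indicator_const _ (hAmeas 1), integral_const]
    simp [measureReal_def, hp1 1]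
    ring
  -- strong law
  have hSLLN := strong_law_ae Y hint hindep' hident
  rw [hexp] at hSLLN
  filter_upwards [hSLLN] with ω hω
  have hXlim : Tendsto (fun n : ℕ => ((X n ω : ℤ) : ℝ) / n) atTop (𝓝 (2 * p - 1)) := by
    refine hω.congr fun n => ?_
    rw [hX n ω]
    push_cast
    rw [smul_eq_mul, inv_mul_eq_div]
  have hf0 : X 0 ω = 0 := by simp [hX]
  have hstep : ∀ k, X (k+1) ω = X k ω + 1 ∨ X (k+1) ω = X k ω - 1 := by
    intro k
    have : X (k+1) ω = X k ω + Z (k+1) ω := by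
      rw [hX, hX, Finset.sum_range_succ]
    rcases hval (k+1) ω with h | h <;> rw [this, h] <;> [left; right] <;> ring
  constructor
  · have := range_card_tendsto (fun k => X k ω) hf0 hstep (2 * p - 1) hXlim
    refine this.congr fun n => ?_
    rw [hR]
  · refine (hXlim.abs).congr fun n => ?_
    rw [Int.cast_abs, abs_div, abs_of_nonneg (by positivity : (0:ℝ) ≤ (n:ℕ))]
end

section
/- Let (x_n) be an integer sequence with |x_{n+1} - x_n| ≤ 1 hitting 0 at infinitely many times τ_0 < τ_1 < ... . If limsup_{n→∞} |x_n|/n > 0, then τ_k/τ_{k-1} does not converge to 1. -/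
open Filter

theorem stmt19 (x : ℕ → ℤ)
    (hinc : ∀ n, |x (n + 1) - x n| ≤ 1)
    (τ : ℕ → ℕ) (hmono : StrictMono τ)
    (hzero : ∀ k, x (τ k) = 0)
    (hall : ∀ n, x n = 0 → ∃ k, τ k = n)
    (hpos : 0 < limsup (fun n : ℕ => ((|x n| : ℤ) : ℝ) / n) atTop) :
    ¬ Tendsto (fun k : ℕ => (τ (k + 1) : ℝ) / (τ k : ℝ)) atTop (nhds 1) := by
  intro h
  have hk : ∀ k, k ≤ τ k := fun k => hmono.le_apply
  -- Lipschitz bound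
  have lip : ∀ a b : ℕ, a ≤ b → |x b - x a| ≤ (b : ℤ) - a := by
    intro a b hab
    induction b, hab using Nat.le_induction with
    | base => simp
    | succ b hab ih =>
      have h1 := hinc b
      calc |x (b + 1) - x a| = |(x (b + 1) - x b) + (x b - x a)| := by ring_nf
        _ ≤ |x (b + 1) - x b| + |x b - x a| := abs_add_le _ _
        _ ≤ 1 + ((b : ℤ) - a) := by linarith
        _ = ((b + 1 : ℕ) : ℤ) - a := by push_cast; ring
  set K : ℕ → ℕ := fun n => Nat.findGreatest (fun k => τ k ≤ n) n with hKdef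
  have hKspec : ∀ n, τ 0 ≤ n → τ (K n) ≤ n := by
    intro n hn
    exact Nat.findGreatest_spec (P := fun k => τ k ≤ n) (Nat.zero_le n) hn
  have hKlt : ∀ n, n < τ (K n + 1) := by
    intro n
    by_cases hc : K n + 1 ≤ n
    · by_contra hle
      push_neg at hle
      exact Nat.findGreatest_is_greatest (Nat.lt_succ_self _) hc hle
    · push_neg at hc
      calc n < K n + 1 := hc
        _ ≤ τ (K n + 1) := hk _
  have hKge : ∀ k n, τ k ≤ n → k ≤ K n := fun k n hn =>
    Nat.le_findGreatest ((hk k).trans hn) hn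
  have hKto : Tendsto K atTop atTop := by
    rw [tendsto_atTop_atTop]
    intro k
    exact ⟨τ k, fun n hn => hKge k n hn⟩
  have hg : Tendsto (fun k => (τ (k + 1) : ℝ) / (τ k : ℝ) - 1) atTop (nhds 0) := by
    have := h.sub (tendsto_const_nhds (x := (1 : ℝ)) (f := atTop))
    simpa using this
  have hgo : Tendsto (fun n => (τ (K n + 1) : ℝ) / (τ (K n) : ℝ) - 1) atTop (nhds 0) :=
    hg.comp hKto
  have hsq : Tendsto (fun n : ℕ => ((|x n| : ℤ) : ℝ) / n) atTop (nhds 0) := by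
    apply tendsto_of_tendsto_of_tendsto_of_le_of_le' (tendsto_const_nhds) hgo
    · filter_upwards [eventually_ge_atTop 1] with n hn
      positivity
    · filter_upwards [eventually_ge_atTop (τ 1)] with n hn
      have h01 : τ 0 < τ 1 := hmono (Nat.lt_succ_self 0)
      have hK1 : 1 ≤ K n := hKge 1 n hn
      have hτK1 : τ 1 ≤ τ (K n) := hmono.monotone hK1
      have hτKpos : 0 < τ (K n) := lt_of_lt_of_le (Nat.lt_of_le_of_lt (Nat.zero_le _) h01) hτK1
      have hτKn : τ (K n) ≤ n := hKspec n (le_trans (le_of_lt h01) hn)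
      have hnlt : n < τ (K n + 1) := hKlt n
      have habs : |x n| ≤ (n : ℤ) - τ (K n) := by
        have := lip (τ (K n)) n hτKn
        rw [hzero (K n), sub_zero] at this
        exact this
      have hstep : ((|x n| : ℤ) : ℝ) / n ≤
          ((τ (K n + 1) : ℝ) - (τ (K n) : ℝ)) / (τ (K n) : ℝ) := by
        apply div_le_div₀
        · have : (τ (K n) : ℝ) ≤ (τ (K n + 1) : ℝ) := by
            exact_mod_cast le_of_lt (hmono (Nat.lt_succ_self _))
          linarith
        · have h1 : ((|x n| : ℤ) : ℝ) ≤ (n : ℝ) - (τ (K n) : ℝ) := by exact_mod_cast habs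
          have h2 : (n : ℝ) ≤ (τ (K n + 1) : ℝ) := by exact_mod_cast le_of_lt hnlt
          linarith
        · exact_mod_cast hτKpos
        · exact_mod_cast hτKn
      calc ((|x n| : ℤ) : ℝ) / n ≤ ((τ (K n + 1) : ℝ) - (τ (K n) : ℝ)) / (τ (K n) : ℝ) := hstep
        _ = (τ (K n + 1) : ℝ) / (τ (K n) : ℝ) - 1 := by
            rw [sub_div, div_self (by exact_mod_cast hτKpos.ne' : (τ (K n) : ℝ) ≠ 0)]
  have hls : limsup (fun n : ℕ => ((|x n| : ℤ) : ℝ) / n) atTop = 0 := hsq.limsup_eq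
  rw [hls] at hpos
  exact lt_irrefl _ hpos
end
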